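/- arXiv:2008.01801 — 8 statements merged into one kernel-verified Lean document; each statement's English description precedes it below -/
import Mathlib

section
/- Let V ⊆ L²(μ) be a closed subspace, Q : L²(μ) → L²(μ) the orthogonal projection onto V, and C : L²(μ) → L²(μ) a continuous self-adjoint linear operator whose range is contained in V. Assume: (ellipticity) there exist reals 0 < a ≤ b with a·‖v‖₂² ≤ ⟨Cv, v⟩ ≤ b·‖v‖₂² for all v ∈ V; (locality) for every L ⊆ 𝒯 and every v ∈ L²(μ) vanishing μ-a.e. outside ⋃_{T∈L} A_T, the function Cv vanishes μ-a.e. outside ⋃_{T : δ(T,L) ≤ 1} A_T, where δ(T,L) := min_{T'∈L} δ(T,T'). Set q := (√(b/a) − 1)/(√(b/a) + 1). Then for all nonempty L, L' ⊆ 𝒯 with N := δ(L,L') ≥ 1 and all u ∈ L²(μ): ‖1_L · Q(1_{L'} · u)‖₂ ≤ (2·q^{N−1}/(1 + q^{2(N−1)}))·‖1_{L'} · u‖₂; in particular ‖1_L · Q(1_{L'} · u)‖₂ ≤ min{2·q^{N−1}, 1}·‖1_{L'} · u‖₂. -/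
open MeasureTheory RealInnerProductSpace

/-- Multiplication of an `L²` function by the indicator function of a measurable set. -/
noncomputable def indMul {Ω : Type*} [MeasurableSpace Ω] {μ : Measure Ω}
    (s : Set Ω) (hs : MeasurableSet s) (u : Lp ℝ 2 μ) : Lp ℝ 2 μ :=
  ((Lp.memLp u).indicator hs).toLp (s.indicator u)

/-- The distance `δ(L, L') = min {δ(T,T') : T ∈ L, T' ∈ L'}` between two collections. -/
noncomputable def setDist {𝒯 : Type*} (δ : 𝒯 → 𝒯 → ℕ) (L L' : Set 𝒯) : ℕ :=
  sInf {n | ∃ T ∈ L, ∃ T' ∈ L', δ T T' = n}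

/-- The union `⋃ T ∈ L, A T` of measurable sets over a collection is measurable. -/
theorem unionMeasurable {Ω 𝒯 : Type*} [MeasurableSpace Ω] [Countable 𝒯] {A : 𝒯 → Set Ω}
    (hA : ∀ T, MeasurableSet (A T)) (L : Set 𝒯) : MeasurableSet (⋃ T ∈ L, A T) :=
  MeasurableSet.biUnion (Set.to_countable L) fun T _ => hA T

open Polynomial in
/-- Chebyshev evaluation at `(y + y⁻¹)/2`. -/
lemma cheb_eval_pair (y : ℝ) (hy : y ≠ 0) (n : ℕ) :
    (Chebyshev.T ℝ (n : ℤ)).eval ((y + y⁻¹) / 2) = (y ^ n + y⁻¹ ^ n) / 2 ∧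
    (Chebyshev.T ℝ ((n : ℤ) + 1)).eval ((y + y⁻¹) / 2) = (y ^ (n + 1) + y⁻¹ ^ (n + 1)) / 2 := by
  induction n with
  | zero => simp
  | succ n ih =>
    obtain ⟨h1, h2⟩ := ih
    constructor
    · push_cast
      exact h2
    · push_cast
      rw [show (n : ℤ) + 1 + 1 = (n : ℤ) + 2 by ring, Chebyshev.T_add_two]
      simp only [eval_sub, eval_mul, eval_ofNat, eval_X, h1, h2]
      linear_combination ((y ^ n + y⁻¹ ^ n) / 2) * mul_inv_cancel₀ hy

open Polynomial in
/-- Pell identity for Chebyshev polynomials. -/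
lemma cheb_pell (n : ℕ) :
    (Chebyshev.T ℝ ((n : ℤ) + 1)) ^ 2 = 1 + (X ^ 2 - 1) * (Chebyshev.U ℝ (n : ℤ)) ^ 2 := by
  induction n with
  | zero => simp
  | succ n ih =>
    have hU := Chebyshev.U_eq_X_mul_U_add_T ℝ (n : ℤ)
    have hT : Chebyshev.T ℝ ((n : ℤ) + 2)
        = X * Chebyshev.T ℝ ((n : ℤ) + 1) + (X ^ 2 - 1) * Chebyshev.U ℝ (n : ℤ) := by
      have h1 := Chebyshev.T_eq_U_sub_X_mul_U ℝ ((n : ℤ) + 2)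
      have h2 := Chebyshev.U_add_two ℝ (n : ℤ)
      have h3 := Chebyshev.U_eq_X_mul_U_add_T ℝ (n : ℤ)
      rw [show ((n : ℤ) + 2) - 1 = (n : ℤ) + 1 by ring] at h1
      linear_combination h1 + h2 + X * h3
    push_cast
    rw [show (n : ℤ) + 1 + 1 = (n : ℤ) + 2 by ring, hT, hU]
    linear_combination ih

open Polynomial in
/-- natDegree bound for Chebyshev polynomials. -/
lemma cheb_natDegree_pair (n : ℕ) :
    (Chebyshev.T ℝ (n : ℤ)).natDegree ≤ n ∧ (Chebyshev.T ℝ ((n : ℤ) + 1)).natDegree ≤ n + 1 := by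
  induction n with
  | zero => constructor <;> simp [natDegree_X_le]
  | succ n ih =>
    obtain ⟨h1, h2⟩ := ih
    constructor
    · push_cast; exact h2
    · push_cast
      rw [show (n : ℤ) + 1 + 1 = (n : ℤ) + 2 by ring, Chebyshev.T_add_two]
      refine (natDegree_sub_le _ _).trans (max_le ?_ (h1.trans (by omega)))
      refine (natDegree_mul_le).trans ?_
      have : (2 * X : ℝ[X]).natDegree ≤ 1 := natDegree_mul_le.trans (by simp)
      omega

section HilbertAux

variable {E : Type*} [NormedAddCommGroup E] [InnerProductSpace ℝ E]

/-- Norm bound for symmetric operators with a quadratic form bound. -/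
lemma symm_apply_norm_le {P : E →L[ℝ] E} (hP : ∀ x y, ⟪P x, y⟫ = ⟪x, P y⟫)
    {c : ℝ} (hc : 0 ≤ c) (hb : ∀ x, |⟪P x, x⟫| ≤ c * ‖x‖ ^ 2) (x : E) : ‖P x‖ ≤ c * ‖x‖ := by
  rcases eq_or_ne (P x) 0 with h | h
  · rw [h, norm_zero]; positivity
  have hx : x ≠ 0 := by rintro rfl; simp at h
  have hPxn : (0:ℝ) < ‖P x‖ := norm_pos_iff.mpr h
  have hxn : (0:ℝ) < ‖x‖ := norm_pos_iff.mpr hx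
  set y := (‖x‖ / ‖P x‖) • P x with hy
  have hyn : ‖y‖ = ‖x‖ := by
    rw [hy, norm_smul, Real.norm_eq_abs, abs_of_nonneg (by positivity)]
    field_simp
  have hxy : ⟪P x, y⟫ = ‖x‖ * ‖P x‖ := by
    rw [hy, real_inner_smul_right, real_inner_self_eq_norm_sq]
    field_simp
  have h1 : ⟪P y, x⟫ = ⟪P x, y⟫ := by rw [hP y x, real_inner_comm]
  have e1 : ⟪P (x + y), x + y⟫ - ⟪P (x - y), x - y⟫ = 4 * ⟪P x, y⟫ := by
    simp only [map_add, map_sub, inner_add_left, inner_add_right, inner_sub_left,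
      inner_sub_right]
    linarith [h1]
  have e2 : ⟪P (x + y), x + y⟫ ≤ c * ‖x + y‖ ^ 2 := (abs_le.mp (hb _)).2
  have e3 : -(c * ‖x - y‖ ^ 2) ≤ ⟪P (x - y), x - y⟫ := by
    have h3 := (abs_le.mp (hb (x - y))).1; linarith
  have epar : ‖x + y‖ ^ 2 + ‖x - y‖ ^ 2 = 2 * (‖x‖ ^ 2 + ‖y‖ ^ 2) := by
    have := parallelogram_law_with_norm ℝ x y
    ring_nf
    ring_nf at this
    linarith
  have epar2 : c * (‖x + y‖ ^ 2 + ‖x - y‖ ^ 2) = 4 * (c * ‖x‖ ^ 2) := by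
    rw [epar, hyn]; ring
  have key : 4 * (‖x‖ * ‖P x‖) ≤ 4 * (c * ‖x‖ ^ 2) := by
    rw [← hxy]
    nlinarith [e1, e2, e3, epar2]
  nlinarith [key, hxn]

/-- Symmetry of powers. -/
lemma symm_pow {P : E →L[ℝ] E} (hP : ∀ x y, ⟪P x, y⟫ = ⟪x, P y⟫) (n : ℕ) :
    ∀ x y, ⟪(P ^ n) x, y⟫ = ⟪x, (P ^ n) y⟫ := by
  induction n with
  | zero => intro x y; simp
  | succ n ih =>
    intro x y
    rw [pow_succ' P n, ContinuousLinearMap.mul_apply, hP, ih, ← ContinuousLinearMap.mul_apply,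
      ← pow_succ P n, pow_succ' P n, ContinuousLinearMap.mul_apply]

open Polynomial in
/-- Symmetry of polynomial evaluations. -/
lemma symm_aeval {P : E →L[ℝ] E} (hP : ∀ x y, ⟪P x, y⟫ = ⟪x, P y⟫) (h : ℝ[X]) :
    ∀ x y, ⟪(aeval P h) x, y⟫ = ⟪x, (aeval P h) y⟫ := by
  induction h using Polynomial.induction_on' with
  | add p q hp hq =>
    intro x y
    simp only [map_add, ContinuousLinearMap.add_apply, inner_add_left, inner_add_right, hp, hq]
  | monomial n c =>
    intro x y
    simp only [aeval_monomial, Algebra.algebraMap_eq_smul_one, ContinuousLinearMap.mul_apply,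
      ContinuousLinearMap.smul_apply, ContinuousLinearMap.one_apply, real_inner_smul_left,
      real_inner_smul_right, smul_eq_mul]
    rw [symm_pow hP n]

end HilbertAux

open Polynomial in
/-- Commuting of polynomial evaluations. -/
lemma aeval_commute' {A : Type*} [Ring A] [Algebra ℝ A] (S : A) (p q : ℝ[X]) :
    (aeval S p) * (aeval S q) = (aeval S q) * (aeval S p) := by
  rw [← map_mul, ← map_mul, mul_comm]

open Polynomial in
/-- `aeval` of a composition with an affine polynomial. -/
lemma aeval_comp_affine {A : Type*} [Ring A] [Algebra ℝ A] (S : A) (u v : ℝ) (h : ℝ[X]) :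
    aeval S (h.comp (C u + C v * X)) = aeval (aeval S (C u + C v * X)) h := by
  induction h using Polynomial.induction_on' with
  | add p q hp hq => simp only [add_comp, map_add, hp, hq]
  | monomial n c => simp only [monomial_comp, aeval_monomial, map_mul, map_pow, aeval_C]

section IndMulAux

variable {Ω : Type*} [MeasurableSpace Ω] {μ : Measure Ω}

lemma indMul_coeFn (s : Set Ω) (hs : MeasurableSet s) (u : Lp ℝ 2 μ) :
    indMul s hs u =ᵐ[μ] s.indicator u := MemLp.coeFn_toLp _

lemma indMul_norm_le (s : Set Ω) (hs : MeasurableSet s) (u : Lp ℝ 2 μ) :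
    ‖indMul s hs u‖ ≤ ‖u‖ := by
  rw [Lp.norm_def, Lp.norm_def]
  refine ENNReal.toReal_mono (Lp.eLpNorm_ne_top u) ?_
  rw [eLpNorm_congr_ae (indMul_coeFn s hs u)]
  exact eLpNorm_indicator_le _

lemma indMul_eq_zero (s : Set Ω) (hs : MeasurableSet s) (u : Lp ℝ 2 μ)
    (h : ∀ᵐ x ∂μ, x ∈ s → (u : Ω → ℝ) x = 0) : indMul s hs u = 0 := by
  refine Lp.ext ?_
  refine (indMul_coeFn s hs u).trans ?_
  have h0 : s.indicator (u : Ω → ℝ) =ᵐ[μ] (0 : Ω → ℝ) := by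
    filter_upwards [h] with x hx
    by_cases hxs : x ∈ s <;> simp [Set.indicator, hxs]
    exact hx hxs
  exact h0.trans (Lp.coeFn_zero ℝ 2 μ).symm

lemma indMul_add (s : Set Ω) (hs : MeasurableSet s) (u v : Lp ℝ 2 μ) :
    indMul s hs (u + v) = indMul s hs u + indMul s hs v := by
  refine Lp.ext ?_
  have h1 := indMul_coeFn (μ := μ) s hs (u + v)
  have h2 := indMul_coeFn (μ := μ) s hs u
  have h3 := indMul_coeFn (μ := μ) s hs v
  have h4 := Lp.coeFn_add (indMul s hs u) (indMul s hs v)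
  have h5 := Lp.coeFn_add u v
  filter_upwards [h1, h2, h3, h4, h5] with x e1 e2 e3 e4 e5
  rw [e1, e4]
  simp only [Pi.add_apply, e2, e3]
  by_cases hxs : x ∈ s
  · rw [Set.indicator_of_mem hxs, Set.indicator_of_mem hxs, Set.indicator_of_mem hxs, e5,
      Pi.add_apply]
  · rw [Set.indicator_of_notMem hxs, Set.indicator_of_notMem hxs,
      Set.indicator_of_notMem hxs, add_zero]

lemma lp_sum_vanish {ι : Type*} (s : Finset ι) (f : ι → Lp ℝ 2 μ) (G : Set Ω)
    (h : ∀ i ∈ s, ∀ᵐ x ∂μ, x ∈ G → (f i : Ω → ℝ) x = 0) :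
    ∀ᵐ x ∂μ, x ∈ G → ((∑ i ∈ s, f i : Lp ℝ 2 μ) : Ω → ℝ) x = 0 := by
  classical
  induction s using Finset.induction with
  | empty =>
    filter_upwards [Lp.coeFn_zero ℝ 2 μ] with x hx _
    simpa using hx
  | insert i t hni ih =>
    rw [Finset.sum_insert hni]
    have ih' := ih (fun j hj => h j (Finset.mem_insert_of_mem hj))
    filter_upwards [Lp.coeFn_add (f i) (∑ j ∈ t, f j), h i (Finset.mem_insert_self i t), ih']
      with x e1 e2 e3 hxG
    rw [e1, Pi.add_apply, e2 hxG, e3 hxG, add_zero]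

end IndMulAux

section SetDistAux

variable {𝒯 : Type*} (δ : 𝒯 → 𝒯 → ℕ)

lemma setDist_le_single {T T' : 𝒯} {M : Set 𝒯} (h : T' ∈ M) : setDist δ {T} M ≤ δ T T' :=
  Nat.sInf_le ⟨T, Set.mem_singleton T, T', h, rfl⟩

lemma setDist_le_pair {L L' : Set 𝒯} {T T' : 𝒯} (h : T ∈ L) (h' : T' ∈ L') :
    setDist δ L L' ≤ δ T T' :=
  Nat.sInf_le ⟨T, h, T', h', rfl⟩

lemma setDist_attained {T : 𝒯} {M : Set 𝒯} (hM : M.Nonempty) :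
    ∃ T' ∈ M, δ T T' = setDist δ {T} M := by
  obtain ⟨T0, hT0⟩ := hM
  have hne : {n | ∃ a ∈ ({T} : Set 𝒯), ∃ b ∈ M, δ a b = n}.Nonempty :=
    ⟨δ T T0, T, Set.mem_singleton T, T0, hT0, rfl⟩
  obtain ⟨a, ha, b, hb, hab⟩ := Nat.sInf_mem hne
  rw [Set.mem_singleton_iff] at ha
  subst ha
  exact ⟨b, hb, hab⟩

end SetDistAux

open Polynomial in
/-- Chebyshev acceleration bound for a symmetric operator with form bounds `a`, `b`. -/
lemma cheb_operator_bound {E : Type*} [NormedAddCommGroup E] [InnerProductSpace ℝ E]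
    (S : E →L[ℝ] E) (hSsymm : ∀ x y, ⟪S x, y⟫ = ⟪x, S y⟫)
    (a b : ℝ) (ha : 0 < a) (hab : a < b)
    (hform : ∀ x, a * ‖x‖ ^ 2 ≤ ⟪S x, x⟫ ∧ ⟪S x, x⟫ ≤ b * ‖x‖ ^ 2)
    (k : ℕ) (hk : 1 ≤ k) (tk : ℝ)
    (htkdef : tk = (Chebyshev.T ℝ (k : ℤ)).eval ((a + b) / (b - a)))
    (htkpos : 0 < tk) :
    ∃ c : ℕ → ℝ, ∀ x : E, ‖x - ∑ i ∈ Finset.range k, c i • ((S ^ i) (S x))‖ ≤ tk⁻¹ * ‖x‖ := by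
  obtain ⟨m, rfl⟩ : ∃ m, k = m + 1 := ⟨k - 1, by omega⟩
  have hba : 0 < b - a := sub_pos.mpr hab
  set x0 : ℝ := (a + b) / (b - a) with hx0
  set Lq : ℝ[X] := Polynomial.C x0 + Polynomial.C (-(2 / (b - a))) * Polynomial.X with hLq
  set P0 : E →L[ℝ] E := aeval S Lq with hP0
  have hP0apply : ∀ x : E, P0 x = x0 • x - (2 / (b - a)) • S x := by
    intro x
    rw [hP0, hLq]
    simp only [map_add, map_mul, aeval_C, aeval_X, Algebra.algebraMap_eq_smul_one,
      ContinuousLinearMap.add_apply, ContinuousLinearMap.mul_apply, neg_smul,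
      ContinuousLinearMap.neg_apply, ContinuousLinearMap.smul_apply,
      ContinuousLinearMap.one_apply]
    abel
  have hP0symm : ∀ x y : E, ⟪P0 x, y⟫ = ⟪x, P0 y⟫ := by
    rw [hP0]; exact symm_aeval hSsymm Lq
  have hP0bound : ∀ x : E, |⟪P0 x, x⟫| ≤ 1 * ‖x‖ ^ 2 := by
    intro x
    obtain ⟨hl, hr⟩ := hform x
    rw [hP0apply x, inner_sub_left, real_inner_smul_left, real_inner_smul_left,
      real_inner_self_eq_norm_sq, one_mul, abs_le]
    constructor
    · have h2 : 2 / (b - a) * ⟪S x, x⟫ ≤ 2 / (b - a) * (b * ‖x‖ ^ 2) :=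
        mul_le_mul_of_nonneg_left hr (by positivity)
      have h3 : x0 * ‖x‖ ^ 2 - 2 / (b - a) * (b * ‖x‖ ^ 2) = -‖x‖ ^ 2 := by
        rw [hx0]; field_simp; ring
      linarith
    · have h2 : 2 / (b - a) * (a * ‖x‖ ^ 2) ≤ 2 / (b - a) * ⟪S x, x⟫ :=
        mul_le_mul_of_nonneg_left hl (by positivity)
      have h3 : x0 * ‖x‖ ^ 2 - 2 / (b - a) * (a * ‖x‖ ^ 2) = ‖x‖ ^ 2 := by
        rw [hx0]; field_simp; ring
      linarith
  have hP0n : ∀ x : E, ‖P0 x‖ ≤ ‖x‖ := by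
    intro x
    have h := symm_apply_norm_le hP0symm zero_le_one hP0bound x
    rwa [one_mul] at h
  -- Chebyshev operators
  set G : E →L[ℝ] E := aeval P0 (Chebyshev.T ℝ ((m : ℤ) + 1)) with hG
  set B : E →L[ℝ] E := aeval P0 (Chebyshev.U ℝ (m : ℤ)) with hB
  have hGsymm : ∀ x y : E, ⟪G x, y⟫ = ⟪x, G y⟫ := by
    rw [hG]; exact symm_aeval hP0symm _
  have hBsymm : ∀ x y : E, ⟪B x, y⟫ = ⟪x, B y⟫ := by
    rw [hB]; exact symm_aeval hP0symm _
  have hpell : G ^ 2 = 1 + (P0 ^ 2 - 1) * B ^ 2 := by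
    have h := congrArg (aeval P0 (R := ℝ)) (cheb_pell m)
    simp only [map_pow, map_add, map_one, map_mul, map_sub, aeval_X] at h
    exact h
  have hGnorm : ∀ x : E, ‖G x‖ ≤ ‖x‖ := by
    intro x
    set D : E →L[ℝ] E := P0 ^ 2 - 1 with hD
    have h1 : ‖G x‖ ^ 2 = ⟪(G ^ 2) x, x⟫ := by
      rw [sq G, ContinuousLinearMap.mul_apply, hGsymm (G x) x,
        ← real_inner_self_eq_norm_sq]
    have h2 : (G ^ 2) x = x + D (B (B x)) := by
      rw [hpell, ContinuousLinearMap.add_apply, ContinuousLinearMap.one_apply,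
        ContinuousLinearMap.mul_apply, sq B, ContinuousLinearMap.mul_apply]
    have hDB : D * B = B * D := by
      have hDform : D = aeval P0 ((Polynomial.X : ℝ[X]) ^ 2 - 1) := by
        rw [hD]; simp only [map_sub, map_pow, aeval_X, map_one]
      rw [hDform, hB]
      exact aeval_commute' P0 _ _
    have h3 : ⟪D (B (B x)), x⟫ = ⟪D (B x), B x⟫ := by
      have hswap : D (B (B x)) = B (D (B x)) := by
        have h := congrArg (fun (F : E →L[ℝ] E) => F (B x)) hDB
        simpa only [ContinuousLinearMap.mul_apply] using h
      rw [hswap]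
      exact hBsymm (D (B x)) x
    have h4 : ⟪D (B x), B x⟫ ≤ 0 := by
      set y : E := B x with hy
      rw [hD, ContinuousLinearMap.sub_apply, sq P0, ContinuousLinearMap.mul_apply,
        ContinuousLinearMap.one_apply, inner_sub_left]
      have h5 : ⟪P0 (P0 y), y⟫ = ‖P0 y‖ ^ 2 := by
        rw [hP0symm (P0 y) y, ← real_inner_self_eq_norm_sq]
      have h6 : ‖P0 y‖ ^ 2 ≤ ‖y‖ ^ 2 := by
        have := hP0n y
        nlinarith [norm_nonneg (P0 y), norm_nonneg y]
      rw [h5, real_inner_self_eq_norm_sq]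
      linarith
    have h7 : ‖G x‖ ^ 2 ≤ ‖x‖ ^ 2 := by
      rw [h1, h2, inner_add_left, real_inner_self_eq_norm_sq]
      have h8 := h3.trans_le h4
      linarith
    nlinarith [norm_nonneg (G x), norm_nonneg x, h7]
  -- the residual polynomial
  set res : ℝ[X] := Polynomial.C tk⁻¹ * ((Chebyshev.T ℝ ((m : ℤ) + 1)).comp Lq) with hres
  have htkx : (Chebyshev.T ℝ ((m : ℤ) + 1)).eval x0 = tk := by
    rw [htkdef]
    norm_cast
  have hg0 : (1 - res).coeff 0 = 0 := by
    rw [Polynomial.coeff_zero_eq_eval_zero, Polynomial.eval_sub, Polynomial.eval_one,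
      hres, Polynomial.eval_mul, Polynomial.eval_C, Polynomial.eval_comp, hLq]
    simp only [Polynomial.eval_add, Polynomial.eval_mul, Polynomial.eval_C,
      Polynomial.eval_X, mul_zero, add_zero]
    rw [htkx, inv_mul_cancel₀ htkpos.ne']
    ring
  obtain ⟨p, hpdvd⟩ := Polynomial.X_dvd_iff.mpr hg0
  have hdeg : p.natDegree < m + 1 := by
    rcases eq_or_ne p 0 with h0 | h0
    · rw [h0, Polynomial.natDegree_zero]; omega
    · have hLdeg : Lq.natDegree ≤ 1 := by
        rw [hLq]
        refine (Polynomial.natDegree_add_le _ _).trans (max_le (by simp) ?_)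
        refine (Polynomial.natDegree_mul_le).trans ?_
        simp
      have hcompdeg : ((Chebyshev.T ℝ ((m : ℤ) + 1)).comp Lq).natDegree ≤ m + 1 := by
        refine (Polynomial.natDegree_comp_le).trans ?_
        calc (Chebyshev.T ℝ ((m : ℤ) + 1)).natDegree * Lq.natDegree ≤ (m + 1) * 1 :=
              Nat.mul_le_mul (cheb_natDegree_pair m).2 hLdeg
        _ = m + 1 := mul_one _
      have h1 : (1 - res).natDegree ≤ m + 1 := by
        refine (Polynomial.natDegree_sub_le _ _).trans (max_le (by simp) ?_)
        rw [hres]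
        refine (Polynomial.natDegree_mul_le).trans ?_
        simpa using hcompdeg
      rw [hpdvd, Polynomial.natDegree_mul Polynomial.X_ne_zero h0,
        Polynomial.natDegree_X] at h1
      omega
  have hcomp : aeval S ((Chebyshev.T ℝ ((m : ℤ) + 1)).comp Lq) = G := by
    rw [hG, hLq]
    rw [aeval_comp_affine S x0 (-(2 / (b - a))) (Chebyshev.T ℝ ((m : ℤ) + 1))]
  have haevalg : aeval S (1 - res) = aeval S p * S := by
    rw [hpdvd, map_mul, aeval_X]
    have h := aeval_commute' S Polynomial.X p
    rw [aeval_X] at h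
    rw [h]
  refine ⟨p.coeff, fun x => ?_⟩
  have hsum : (aeval S p) (S x) = ∑ i ∈ Finset.range (m + 1), p.coeff i • ((S ^ i) (S x)) := by
    rw [Polynomial.aeval_eq_sum_range' hdeg, ContinuousLinearMap.sum_apply]
    simp only [ContinuousLinearMap.smul_apply]
  rw [← hsum]
  have happly : x - (aeval S p) (S x) = tk⁻¹ • G x := by
    have h1 : (aeval S (1 - res)) x = x - tk⁻¹ • G x := by
      rw [map_sub, map_one, hres, map_mul, aeval_C, hcomp]
      simp only [ContinuousLinearMap.sub_apply, ContinuousLinearMap.one_apply,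
        Algebra.algebraMap_eq_smul_one, ContinuousLinearMap.mul_apply,
        ContinuousLinearMap.smul_apply]
    have h2 : (aeval S (1 - res)) x = (aeval S p) (S x) := by
      rw [haevalg, ContinuousLinearMap.mul_apply]
    rw [← h2, h1]
    abel
  rw [happly, norm_smul, Real.norm_eq_abs, abs_of_pos (inv_pos.mpr htkpos)]
  exact mul_le_mul_of_nonneg_left (hGnorm x) (by positivity)

set_option maxHeartbeats 1600000 in
open Polynomial in
/-- Decay estimate of Bank–Yserentant.  Let `V` be a closed subspace of
`L²(μ)`, `Q` the orthogonal projection onto `V` and `C` a continuous self-adjoint linear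
operator with range in `V` satisfying the ellipticity and locality properties.  With
`q = (√(b/a) − 1)/(√(b/a) + 1)` one has, for nonempty collections `L, L'` at distance
`N = δ(L,L') ≥ 1`, the decay estimates
`‖1_L Q(1_{L'} u)‖₂ ≤ (2 q^{N−1}/(1+q^{2(N−1)})) ‖1_{L'} u‖₂ ≤ min{2 q^{N−1},1} ‖1_{L'} u‖₂`. -/
theorem stmt_1 {Ω : Type*} [MeasurableSpace Ω] (μ : Measure Ω)
    {𝒯 : Type*} [Fintype 𝒯] [Nonempty 𝒯]
    (A : 𝒯 → Set Ω) (hAmeas : ∀ T, MeasurableSet (A T))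
    (hdisj : Pairwise (Function.onFun Disjoint A))
    (hApos : ∀ T, 0 < μ (A T))
    (hcover : μ (Set.univ \ ⋃ T, A T) = 0)
    (δ : 𝒯 → 𝒯 → ℕ)
    (hδ0 : ∀ T T', δ T T' = 0 ↔ T = T')
    (hδsymm : ∀ T T', δ T T' = δ T' T)
    (hδtri : ∀ T T' T'', δ T T'' ≤ δ T T' + δ T' T'')
    (V : Submodule ℝ (Lp ℝ 2 μ)) [CompleteSpace V]
    (C : Lp ℝ 2 μ →L[ℝ] Lp ℝ 2 μ)
    (hself : ∀ u w : Lp ℝ 2 μ, ⟪C u, w⟫ = ⟪u, C w⟫)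
    (hrange : ∀ u : Lp ℝ 2 μ, C u ∈ V)
    (a b : ℝ) (ha : 0 < a) (hab : a ≤ b)
    (hell : ∀ v ∈ V, a * ‖v‖ ^ 2 ≤ ⟪C v, v⟫ ∧ ⟪C v, v⟫ ≤ b * ‖v‖ ^ 2)
    (hloc : ∀ (L : Set 𝒯) (v : Lp ℝ 2 μ),
      (∀ᵐ x ∂μ, x ∉ ⋃ T ∈ L, A T → (v : Ω → ℝ) x = 0) →
      (∀ᵐ x ∂μ, x ∉ ⋃ T ∈ {T' : 𝒯 | setDist δ {T'} L ≤ 1}, A T → (C v : Ω → ℝ) x = 0))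
    (q : ℝ) (hq : q = (Real.sqrt (b / a) - 1) / (Real.sqrt (b / a) + 1))
    (L L' : Set 𝒯) (hL : L.Nonempty) (hL' : L'.Nonempty)
    (N : ℕ) (hN : N = setDist δ L L') (hN1 : 1 ≤ N)
    (u : Lp ℝ 2 μ) :
    ‖indMul (⋃ T ∈ L, A T) (unionMeasurable hAmeas L)
        (Submodule.orthogonalProjectionOnto V (indMul (⋃ T ∈ L', A T) (unionMeasurable hAmeas L') u) : Lp ℝ 2 μ)‖
      ≤ (2 * q ^ (N - 1) / (1 + q ^ (2 * (N - 1))))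
        * ‖indMul (⋃ T ∈ L', A T) (unionMeasurable hAmeas L') u‖ ∧
    ‖indMul (⋃ T ∈ L, A T) (unionMeasurable hAmeas L)
        (Submodule.orthogonalProjectionOnto V (indMul (⋃ T ∈ L', A T) (unionMeasurable hAmeas L') u) : Lp ℝ 2 μ)‖
      ≤ min (2 * q ^ (N - 1)) 1
        * ‖indMul (⋃ T ∈ L', A T) (unionMeasurable hAmeas L') u‖ := by
  classical
  set w' : Lp ℝ 2 μ := indMul (⋃ T ∈ L', A T) (unionMeasurable hAmeas L') u with hw'def
  set gp : V := Submodule.orthogonalProjectionOnto V w' with hgdef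
  clear_value gp
  -- basic facts about q
  have hba1 : 1 ≤ b / a := (one_le_div ha).mpr hab
  have hs1 : 1 ≤ Real.sqrt (b / a) := by
    rw [show (1:ℝ) = Real.sqrt 1 by simp]
    exact Real.sqrt_le_sqrt hba1
  have hq0 : 0 ≤ q := by
    rw [hq]; apply div_nonneg <;> linarith
  -- the projection is a contraction
  have hgnorm : ‖gp‖ ≤ ‖w'‖ := by
    rw [hgdef]
    calc ‖Submodule.orthogonalProjectionOnto V w'‖ ≤ ‖(Submodule.orthogonalProjectionOnto V : Lp ℝ 2 μ →L[ℝ] V)‖ * ‖w'‖ :=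
          (Submodule.orthogonalProjectionOnto V).le_opNorm w'
    _ ≤ 1 * ‖w'‖ := mul_le_mul_of_nonneg_right V.orthogonalProjectionOnto_norm_le (norm_nonneg _)
    _ = ‖w'‖ := one_mul _
  have hgcoe_norm : ‖(gp : Lp ℝ 2 μ)‖ = ‖gp‖ := rfl
  -- first inequality
  have key : ‖indMul (⋃ T ∈ L, A T) (unionMeasurable hAmeas L) (gp : Lp ℝ 2 μ)‖
      ≤ (2 * q ^ (N - 1) / (1 + q ^ (2 * (N - 1)))) * ‖w'‖ := by
    rcases eq_or_lt_of_le hN1 with h1 | hN2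
    · -- N = 1 : trivial bound
      have hN0 : N - 1 = 0 := by omega
      have hc1 : (2 * q ^ (N - 1) / (1 + q ^ (2 * (N - 1)))) = 1 := by
        rw [hN0]
        norm_num
      rw [hc1, one_mul]
      calc ‖indMul (⋃ T ∈ L, A T) (unionMeasurable hAmeas L) (gp : Lp ℝ 2 μ)‖
          ≤ ‖(gp : Lp ℝ 2 μ)‖ := indMul_norm_le _ _ _
      _ = ‖gp‖ := hgcoe_norm
      _ ≤ ‖w'‖ := hgnorm
    · -- N ≥ 2
      have hN2' : 2 ≤ N := hN2
      -- the restriction S of C to V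
      have hmemS : ∀ x : V, (C.comp V.subtypeL) x ∈ V := fun x => hrange _
      set S : V →L[ℝ] V := ContinuousLinearMap.codRestrict (C.comp V.subtypeL) V hmemS
        with hSdef
      have hSx : ∀ x : V, ((S x : V) : Lp ℝ 2 μ) = C (x : Lp ℝ 2 μ) := fun x => rfl
      clear_value S
      have hSsymm : ∀ x y : V, ⟪S x, y⟫ = ⟪x, S y⟫ := by
        intro x y
        rw [Submodule.coe_inner, Submodule.coe_inner, hSx, hSx]
        exact hself _ _
      have hSform : ∀ x : V, a * ‖x‖ ^ 2 ≤ ⟪S x, x⟫ ∧ ⟪S x, x⟫ ≤ b * ‖x‖ ^ 2 := by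
        intro x
        have h := hell (x : Lp ℝ 2 μ) x.2
        rw [Submodule.coe_inner, hSx]
        exact h
      -- S gp = C w' as an element of V
      have hCg : C (gp : Lp ℝ 2 μ) = C w' := by
        have hd : ⟪w' - (gp : Lp ℝ 2 μ), C (C (w' - (gp : Lp ℝ 2 μ)))⟫ = 0 := by
          rw [hgdef]
          exact V.starProjection_inner_eq_zero w' _ (hrange _)
        have hd2 : ⟪C w' - C (gp : Lp ℝ 2 μ), C w' - C (gp : Lp ℝ 2 μ)⟫ = 0 := by
          rw [← map_sub, hself]
          exact hd
        have h0 := inner_self_eq_zero.mp hd2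
        have := sub_eq_zero.mp h0
        exact this.symm
      have hSg : ((S gp : V) : Lp ℝ 2 μ) = C w' := by rw [hSx, hCg]
      -- neighbourhoods of L'
      set ball : ℕ → Set 𝒯 := fun j => {T : 𝒯 | setDist δ {T} L' ≤ j} with hball
      clear_value ball
      have hballne : ∀ j, (ball j).Nonempty := by
        intro j
        obtain ⟨T0, hT0⟩ := hL'
        refine ⟨T0, ?_⟩
        simp only [hball, Set.mem_setOf_eq]
        calc setDist δ {T0} L' ≤ δ T0 T0 := setDist_le_single δ hT0
        _ = 0 := (hδ0 T0 T0).mpr rfl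
        _ ≤ j := Nat.zero_le j
      have hstep : ∀ j, {T'' : 𝒯 | setDist δ {T''} (ball j) ≤ 1} ⊆ ball (j + 1) := by
        intro j T hT
        simp only [Set.mem_setOf_eq] at hT
        obtain ⟨T1, hT1mem, hT1⟩ := setDist_attained δ (hballne j) (T := T)
        have hd1 : δ T T1 ≤ 1 := by rw [hT1]; exact hT
        simp only [hball, Set.mem_setOf_eq] at hT1mem
        obtain ⟨T2, hT2mem, hT2⟩ := setDist_attained δ hL' (T := T1)
        have hd2 : δ T1 T2 ≤ j := by rw [hT2]; exact hT1mem
        have hd3 : δ T T2 ≤ j + 1 := le_trans (hδtri T T1 T2) (by omega)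
        simp only [hball, Set.mem_setOf_eq]
        exact le_trans (setDist_le_single δ hT2mem) hd3
      -- support propagation
      have hw'supp : ∀ᵐ x ∂μ, x ∉ ⋃ T ∈ L', A T → (w' : Ω → ℝ) x = 0 := by
        filter_upwards [indMul_coeFn (⋃ T ∈ L', A T) (unionMeasurable hAmeas L') u]
          with x hx hxs
        rw [hw'def, hx, Set.indicator_of_notMem hxs]
      have hsupp : ∀ j : ℕ, ∀ᵐ x ∂μ, x ∉ ⋃ T ∈ ball (j + 1), A T →
          (((C ^ (j + 1)) w' : Lp ℝ 2 μ) : Ω → ℝ) x = 0 := by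
        intro j
        induction j with
        | zero =>
          have h0 := hloc L' w' hw'supp
          rw [pow_one]
          have hEq : {T' : 𝒯 | setDist δ {T'} L' ≤ 1} = ball (0 + 1) := by
            rw [hball]
          rw [← hEq]
          exact h0
        | succ j ih =>
          have hnext := hloc (ball (j + 1)) ((C ^ (j + 1)) w') ih
          have hsub : (⋃ T ∈ {T' : 𝒯 | setDist δ {T'} (ball (j + 1)) ≤ 1}, A T)
              ⊆ ⋃ T ∈ ball (j + 1 + 1), A T :=
            Set.biUnion_subset_biUnion_left (hstep (j + 1))
          rw [pow_succ']
          filter_upwards [hnext] with x hx hxnot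
          rw [ContinuousLinearMap.mul_apply]
          exact hx (fun hmem => hxnot (hsub hmem))
      -- L is far from ball (N - 1)
      have hLdisj : ∀ x, x ∈ (⋃ T ∈ L, A T) → x ∉ ⋃ T ∈ ball (N - 1), A T := by
        intro x hx1 hx2
        rw [Set.mem_iUnion₂] at hx1 hx2
        obtain ⟨T1, hT1, hxT1⟩ := hx1
        obtain ⟨T2, hT2, hxT2⟩ := hx2
        have hTeq : T1 = T2 := by
          by_contra hne
          exact (Set.disjoint_left.mp (hdisj hne)) hxT1 hxT2
        simp only [hball, Set.mem_setOf_eq] at hT2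
        rw [← hTeq] at hT2
        obtain ⟨T3, hT3, hd3⟩ := setDist_attained δ hL' (T := T1)
        have h4 : N ≤ δ T1 T3 := by rw [hN]; exact setDist_le_pair δ hT1 hT3
        have h5 : δ T1 T3 ≤ N - 1 := by rw [hd3]; exact hT2
        omega
      rcases eq_or_lt_of_le hab with hab1 | hab2
      · -- a = b : C acts as a • id on V and the projection is supported near L'
        have hq0' : q = 0 := by
          rw [hq, ← hab1, div_self ha.ne', Real.sqrt_one]
          norm_num
        have hSid : ∀ x : V, S x = a • x := by
          intro x
          have hsym : ∀ z y : V, ⟪(S - a • (1 : V →L[ℝ] V)) z, y⟫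
              = ⟪z, (S - a • (1 : V →L[ℝ] V)) y⟫ := by
            intro z y
            simp only [ContinuousLinearMap.sub_apply, ContinuousLinearMap.smul_apply,
              ContinuousLinearMap.one_apply, inner_sub_left, inner_sub_right,
              real_inner_smul_left, real_inner_smul_right]
            rw [hSsymm z y]
            congr 1
            exact (real_inner_smul_left z y a).trans (real_inner_smul_right z y a).symm
          have hb0 : ∀ z : V, |⟪(S - a • (1 : V →L[ℝ] V)) z, z⟫| ≤ 0 * ‖z‖ ^ 2 := by
            intro z
            obtain ⟨hl, hr⟩ := hSform z
            rw [← hab1] at hr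
            have hsz : ⟪(a • (1 : V →L[ℝ] V)) z, z⟫ = a * ‖z‖ ^ 2 := by
              rw [ContinuousLinearMap.smul_apply, ContinuousLinearMap.one_apply]
              exact (real_inner_smul_left z z a).trans (by rw [real_inner_self_eq_norm_sq])
            simp only [ContinuousLinearMap.smul_apply, ContinuousLinearMap.one_apply] at hsz
            simp only [ContinuousLinearMap.sub_apply, ContinuousLinearMap.smul_apply,
              ContinuousLinearMap.one_apply, inner_sub_left, real_inner_smul_left,
              real_inner_self_eq_norm_sq]
            rw [zero_mul, abs_le]
            constructor <;> linarith
          have h6 := symm_apply_norm_le hsym le_rfl hb0 x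
          rw [zero_mul] at h6
          have h7 : (S - a • (1 : V →L[ℝ] V)) x = 0 := norm_le_zero_iff.mp h6
          have h8 : S x - a • x = 0 := by
            simpa only [ContinuousLinearMap.sub_apply, ContinuousLinearMap.smul_apply,
              ContinuousLinearMap.one_apply] using h7
          exact sub_eq_zero.mp h8
        have hgeq : (gp : Lp ℝ 2 μ) = a⁻¹ • C w' := by
          have h1 : a • (gp : Lp ℝ 2 μ) = C w' := by
            rw [← hSg, hSid gp, Submodule.coe_smul]
          rw [← h1, smul_smul, inv_mul_cancel₀ ha.ne', one_smul]
        have hvan : indMul (⋃ T ∈ L, A T) (unionMeasurable hAmeas L) (gp : Lp ℝ 2 μ) = 0 := by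
          apply indMul_eq_zero
          have hsub : (⋃ T ∈ ball (0 + 1), A T) ⊆ ⋃ T ∈ ball (N - 1), A T :=
            Set.biUnion_subset_biUnion_left (fun T hT => by
              simp only [hball, Set.mem_setOf_eq] at hT ⊢
              omega)
          filter_upwards [hsupp 0, Lp.coeFn_smul a⁻¹ (C w')] with x h1 h2 hxL
          rw [pow_one] at h1
          rw [hgeq, h2, Pi.smul_apply, h1 (fun hmem => hLdisj x hxL (hsub hmem)), smul_zero]
        rw [hvan, norm_zero]
        have hc0 : (2 * q ^ (N - 1) / (1 + q ^ (2 * (N - 1)))) = 0 := by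
          rw [hq0', zero_pow (by omega : N - 1 ≠ 0)]
          norm_num
        rw [hc0, zero_mul]
      · -- a < b : Chebyshev acceleration
        have hba : 0 < b - a := sub_pos.mpr hab2
        have hs1' : 1 < Real.sqrt (b / a) := by
          rw [show (1:ℝ) = Real.sqrt 1 by simp]
          exact Real.sqrt_lt_sqrt (by norm_num) ((one_lt_div ha).mpr hab2)
        have hqpos : 0 < q := by
          rw [hq]; apply div_pos <;> linarith
        have hqne : q ≠ 0 := ne_of_gt hqpos
        set k : ℕ := N - 1 with hk
        have hk1 : 1 ≤ k := by omega
        -- the value of the Chebyshev polynomial at (a+b)/(b-a)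
        set tk : ℝ := (Chebyshev.T ℝ (k : ℤ)).eval ((a + b) / (b - a)) with htkdef
        have hx0q : (a + b) / (b - a) = (q + q⁻¹) / 2 := by
          have hs2 : Real.sqrt (b / a) ^ 2 = b / a := Real.sq_sqrt (by positivity)
          set s := Real.sqrt (b / a) with hsdef
          have h3 : b = s ^ 2 * a := by
            field_simp at hs2
            linarith [hs2]
          rw [hq, h3, inv_div]
          have h1 : s - 1 > 0 := by linarith
          have h2 : s + 1 > 0 := by linarith
          have h4 : -a + a * s ^ 2 ≠ 0 := by nlinarith
          rw [div_add_div _ _ h2.ne' h1.ne', div_div,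
            div_eq_div_iff (by intro h; apply h4; linarith) (by positivity)]
          ring
        have htk : tk = (1 + q ^ (2 * k)) / (2 * q ^ k) := by
          have h1 := (cheb_eval_pair q hqne k).1
          rw [htkdef, hx0q, h1, inv_pow]
          rw [show 2 * k = k + k by ring, pow_add]
          rw [eq_div_iff (by positivity : (2:ℝ) * q ^ k ≠ 0)]
          field_simp
          ring
        have htkpos : 0 < tk := by rw [htk]; positivity
        have hcoef : 2 * q ^ (N - 1) / (1 + q ^ (2 * (N - 1))) = tk⁻¹ := by
          rw [← hk, htk, inv_div]
        -- apply the Chebyshev operator bound on V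
        obtain ⟨c, hbound⟩ := cheb_operator_bound S hSsymm a b ha hab2 hSform k hk1 tk
          htkdef htkpos
        have hnorm1 := hbound gp
        -- coercion of the approximation to Lp
        have hSpow : ∀ (i : ℕ) (x : V), (((S ^ i) x : V) : Lp ℝ 2 μ)
            = (C ^ i) (x : Lp ℝ 2 μ) := by
          intro i
          induction i with
          | zero => intro x; simp
          | succ i ih =>
            intro x
            rw [pow_succ S i, ContinuousLinearMap.mul_apply, pow_succ C i,
              ContinuousLinearMap.mul_apply, ih (S x), hSx x]
        have happcoe : ((∑ i ∈ Finset.range k, c i • ((S ^ i) (S gp)) : V) : Lp ℝ 2 μ)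
            = ∑ i ∈ Finset.range k, c i • ((C ^ (i + 1)) w') := by
          rw [AddSubmonoidClass.coe_finset_sum]
          refine Finset.sum_congr rfl fun i _ => ?_
          rw [Submodule.coe_smul]
          congr 1
          rw [hSpow i (S gp), hSg, pow_succ C i, ContinuousLinearMap.mul_apply]
        set e : Lp ℝ 2 μ := ∑ i ∈ Finset.range k, c i • ((C ^ (i + 1)) w') with he
        clear_value e
        have hevanish : ∀ᵐ x ∂μ, x ∈ (⋃ T ∈ L, A T) → (e : Ω → ℝ) x = 0 := by
          rw [he]
          refine lp_sum_vanish (Finset.range k) _ _ ?_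
          intro i hi
          rw [Finset.mem_range] at hi
          have hsub : (⋃ T ∈ ball (i + 1), A T) ⊆ ⋃ T ∈ ball (N - 1), A T :=
            Set.biUnion_subset_biUnion_left (fun T hT => by
              simp only [hball, Set.mem_setOf_eq] at hT ⊢
              omega)
          filter_upwards [hsupp i, Lp.coeFn_smul (c i) ((C ^ (i + 1)) w')]
            with x h1 h2 hxL
          rw [h2, Pi.smul_apply, h1 (fun hmem => hLdisj x hxL (hsub hmem)), smul_zero]
        have hindE : indMul (⋃ T ∈ L, A T) (unionMeasurable hAmeas L) e = 0 :=
          indMul_eq_zero _ _ _ hevanish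
        have hsplit : indMul (⋃ T ∈ L, A T) (unionMeasurable hAmeas L) (gp : Lp ℝ 2 μ)
            = indMul (⋃ T ∈ L, A T) (unionMeasurable hAmeas L) ((gp : Lp ℝ 2 μ) - e) := by
          conv_lhs => rw [show (gp : Lp ℝ 2 μ) = ((gp : Lp ℝ 2 μ) - e) + e by abel]
          rw [indMul_add, hindE, add_zero]
        have hdiff : (gp : Lp ℝ 2 μ) - e
            = ((gp - ∑ i ∈ Finset.range k, c i • ((S ^ i) (S gp)) : V) : Lp ℝ 2 μ) := by
          rw [← happcoe, ← Submodule.coe_sub]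
        calc ‖indMul (⋃ T ∈ L, A T) (unionMeasurable hAmeas L) (gp : Lp ℝ 2 μ)‖
            = ‖indMul (⋃ T ∈ L, A T) (unionMeasurable hAmeas L) ((gp : Lp ℝ 2 μ) - e)‖ := by
              rw [hsplit]
        _ ≤ ‖(gp : Lp ℝ 2 μ) - e‖ := indMul_norm_le _ _ _
        _ = ‖gp - ∑ i ∈ Finset.range k, c i • ((S ^ i) (S gp))‖ := by rw [hdiff]; rfl
        _ ≤ tk⁻¹ * ‖gp‖ := hnorm1
        _ ≤ tk⁻¹ * ‖w'‖ := mul_le_mul_of_nonneg_left hgnorm (by positivity)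
        _ = (2 * q ^ (N - 1) / (1 + q ^ (2 * (N - 1)))) * ‖w'‖ := by rw [hcoef]
  -- second inequality from the first
  have hcoefle : 2 * q ^ (N - 1) / (1 + q ^ (2 * (N - 1))) ≤ min (2 * q ^ (N - 1)) 1 := by
    have hx0 : 0 ≤ q ^ (N - 1) := pow_nonneg hq0 _
    have hsq : q ^ (2 * (N - 1)) = (q ^ (N - 1)) ^ 2 := by
      rw [mul_comm 2 (N - 1), pow_mul]
    rw [hsq]
    refine le_min ?_ ?_
    · exact div_le_self (by positivity) (by nlinarith)
    · rw [div_le_one (by positivity)]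
      nlinarith [sq_nonneg (q ^ (N - 1) - 1)]
  refine ⟨key, le_trans key ?_⟩
  exact mul_le_mul_of_nonneg_right hcoefle (norm_nonneg _)
end

section
/- Let Q : L²(μ) → L²(μ) be a linear operator with ‖Qu‖₂ ≤ ‖u‖₂ for all u ∈ L²(μ), let γ ≥ 1 and c > 0 be reals, and assume that for every function w : 𝒯 → (0,∞) satisfying w(T) ≤ γ^{δ(T,T')}·w(T') for all T, T' ∈ 𝒯, the weighted estimate ‖ρ_w·Qu‖₂ ≤ c·‖ρ_w·u‖₂ holds for all u ∈ L²(μ), where ρ_w := ∑_{T∈𝒯} w(T)·1_{\{T\}}. Then for all nonempty L, L' ⊆ 𝒯 and all u ∈ L²(μ): ‖1_L · Q(1_{L'} · u)‖₂ ≤ min{c·γ^{−δ(L,L')}, 1}·‖1_{L'} · u‖₂. -/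
open MeasureTheory

/-- Weighted `L²`-estimates imply decay estimates.  Let `Q` be a linear
operator on `L²(μ)` with `‖Qu‖₂ ≤ ‖u‖₂` which is stable with constant `c` in the weighted
`L²`-norm for every piecewise constant weight `ρ_w = ∑_T w(T) 1_{A_T}` with grading `γ`, i.e.
`w(T) ≤ γ^{δ(T,T')} w(T')`.  Then for all nonempty collections `L, L'` and all `u`:
`‖1_L Q(1_{L'} u)‖₂ ≤ min{c γ^{−δ(L,L')}, 1} ‖1_{L'} u‖₂`. -/
theorem stmt_3 {Ω : Type*} [MeasurableSpace Ω] (μ : Measure Ω)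
    {𝒯 : Type*} [Fintype 𝒯] [Nonempty 𝒯]
    (A : 𝒯 → Set Ω) (hAmeas : ∀ T, MeasurableSet (A T))
    (hdisj : Pairwise (Function.onFun Disjoint A))
    (hApos : ∀ T, 0 < μ (A T))
    (hcover : μ (Set.univ \ ⋃ T, A T) = 0)
    (δ : 𝒯 → 𝒯 → ℕ)
    (hδ0 : ∀ T T', δ T T' = 0 ↔ T = T')
    (hδsymm : ∀ T T', δ T T' = δ T' T)
    (hδtri : ∀ T T' T'', δ T T'' ≤ δ T T' + δ T' T'')
    (Q : Lp ℝ 2 μ →ₗ[ℝ] Lp ℝ 2 μ)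
    (hQ : ∀ u : Lp ℝ 2 μ, ‖Q u‖ ≤ ‖u‖)
    (γ : ℝ) (hγ : 1 ≤ γ) (c : ℝ) (hc : 0 < c)
    (hweighted : ∀ w : 𝒯 → ℝ, (∀ T, 0 < w T) →
      (∀ T T', w T ≤ γ ^ δ T T' * w T') →
      ∀ u : Lp ℝ 2 μ,
        eLpNorm (fun x => (∑ T, w T * (A T).indicator (fun _ => (1 : ℝ)) x)
          * (Q u : Ω → ℝ) x) 2 μ
        ≤ ENNReal.ofReal c
          * eLpNorm (fun x => (∑ T, w T * (A T).indicator (fun _ => (1 : ℝ)) x)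
              * (u : Ω → ℝ) x) 2 μ)
    (L L' : Set 𝒯) (hL : L.Nonempty) (hL' : L'.Nonempty)
    (u : Lp ℝ 2 μ) :
    ‖indMul (⋃ T ∈ L, A T) (unionMeasurable hAmeas L)
        (Q (indMul (⋃ T ∈ L', A T) (unionMeasurable hAmeas L') u))‖
      ≤ min (c * (γ ^ setDist δ L L')⁻¹) 1
        * ‖indMul (⋃ T ∈ L', A T) (unionMeasurable hAmeas L') u‖ := by
  classical
  set S : Set Ω := ⋃ T ∈ L, A T with hSdef
  set S' : Set Ω := ⋃ T ∈ L', A T with hS'def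
  set v : Lp ℝ 2 μ := indMul S' (unionMeasurable hAmeas L') u with hvdef
  set d : ℕ := setDist δ L L' with hddef
  have hγ0 : (0:ℝ) < γ := lt_of_lt_of_le one_pos hγ
  -- the distance from a single tile to L'
  set dT : 𝒯 → ℕ := fun T => setDist δ {T} L' with hdTdef
  have hdT_mem : ∀ T, ∃ T' ∈ L', δ T T' = dT T := by
    intro T
    have hne : {n | ∃ a ∈ ({T} : Set 𝒯), ∃ b ∈ L', δ a b = n}.Nonempty := by
      obtain ⟨b, hb⟩ := hL'
      exact ⟨δ T b, T, rfl, b, hb, rfl⟩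
    have := Nat.sInf_mem hne
    obtain ⟨a, ha, b, hb, hab⟩ := this
    rcases ha with rfl
    exact ⟨b, hb, hab⟩
  have hdT_le : ∀ T, ∀ b ∈ L', dT T ≤ δ T b := by
    intro T b hb
    exact Nat.sInf_le ⟨T, rfl, b, hb, rfl⟩
  have hdT_tri : ∀ T T', dT T ≤ δ T T' + dT T' := by
    intro T T'
    obtain ⟨b, hb, hbeq⟩ := hdT_mem T'
    calc dT T ≤ δ T b := hdT_le T b hb
    _ ≤ δ T T' + δ T' b := hδtri T T' b
    _ = δ T T' + dT T' := by rw [hbeq]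
  have hdT_zero : ∀ T ∈ L', dT T = 0 := by
    intro T hT
    have := hdT_le T T hT
    simpa [(hδ0 T T).mpr rfl] using this
  have hd_le_dT : ∀ T ∈ L, d ≤ dT T := by
    intro T hT
    obtain ⟨b, hb, hbeq⟩ := hdT_mem T
    rw [← hbeq]
    exact Nat.sInf_le ⟨T, hT, b, hb, rfl⟩
  -- the weight
  set w : 𝒯 → ℝ := fun T => γ ^ dT T with hwdef
  have hwpos : ∀ T, 0 < w T := fun T => pow_pos hγ0 _
  have hwcond : ∀ T T', w T ≤ γ ^ δ T T' * w T' := by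
    intro T T'
    rw [hwdef]
    simp only
    rw [← pow_add]
    exact pow_le_pow_right₀ hγ (hdT_tri T T')
  set ρ : Ω → ℝ := fun x => ∑ T, w T * (A T).indicator (fun _ => (1:ℝ)) x with hρdef
  have hρ_eq : ∀ T₀, ∀ x ∈ A T₀, ρ x = w T₀ := by
    intro T₀ x hx
    rw [hρdef]
    simp only
    rw [Finset.sum_eq_single T₀]
    · simp [Set.indicator_of_mem hx]
    · intro T _ hT
      have hxT : x ∉ A T := fun h => (hdisj hT).le_bot ⟨h, hx⟩
      simp [Set.indicator_of_notMem hxT]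
    · simp
  -- v agrees a.e. with the indicator
  have hv_ae : (v : Ω → ℝ) =ᵐ[μ] S'.indicator u :=
    MemLp.coeFn_toLp _
  -- Claim A : ρ * v = indicator a.e.
  have hA_ae : (fun x => ρ x * (v : Ω → ℝ) x) =ᵐ[μ] S'.indicator u := by
    filter_upwards [hv_ae] with x hx
    rw [hx]
    by_cases hxS : x ∈ S'
    · obtain ⟨T₀, hT₀, hxT₀⟩ := Set.mem_iUnion₂.mp hxS
      rw [hρ_eq T₀ x hxT₀]
      have : w T₀ = 1 := by rw [hwdef]; simp [hdT_zero T₀ hT₀]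
      rw [this, one_mul]
    · simp [Set.indicator_of_notMem hxS]
  -- Claim B : pointwise bound
  have hB : ∀ x, ‖(γ ^ d : ℝ) • S.indicator (⇑(Q v) : Ω → ℝ) x‖ ≤
      ‖ρ x * (⇑(Q v) : Ω → ℝ) x‖ := by
    intro x
    by_cases hxS : x ∈ S
    · obtain ⟨T₀, hT₀, hxT₀⟩ := Set.mem_iUnion₂.mp hxS
      rw [hρ_eq T₀ x hxT₀, Set.indicator_of_mem hxS]
      rw [smul_eq_mul, norm_mul, norm_mul]
      apply mul_le_mul_of_nonneg_right _ (norm_nonneg _)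
      rw [Real.norm_eq_abs, Real.norm_eq_abs, abs_of_pos (pow_pos hγ0 _),
        abs_of_pos (hwpos T₀)]
      exact pow_le_pow_right₀ hγ (hd_le_dT T₀ hT₀)
    · rw [Set.indicator_of_notMem hxS, smul_zero, norm_zero]
      exact norm_nonneg _
  -- main ENNReal estimate
  have key : ENNReal.ofReal (γ ^ d) * eLpNorm (S.indicator (⇑(Q v))) 2 μ
      ≤ ENNReal.ofReal c * eLpNorm (S'.indicator (⇑u)) 2 μ := by
    have h1 : ENNReal.ofReal (γ ^ d) * eLpNorm (S.indicator (⇑(Q v))) 2 μ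
        = eLpNorm ((γ ^ d : ℝ) • S.indicator (⇑(Q v))) 2 μ := by
      rw [eLpNorm_const_smul, Real.enorm_eq_ofReal (le_of_lt (pow_pos hγ0 d))]
    rw [h1]
    calc eLpNorm ((γ ^ d : ℝ) • S.indicator (⇑(Q v))) 2 μ
        ≤ eLpNorm (fun x => ρ x * (⇑(Q v) : Ω → ℝ) x) 2 μ := eLpNorm_mono hB
      _ ≤ ENNReal.ofReal c * eLpNorm (fun x => ρ x * (v : Ω → ℝ) x) 2 μ :=
          hweighted w hwpos hwcond v
      _ = ENNReal.ofReal c * eLpNorm (S'.indicator (⇑u)) 2 μ := by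
          rw [eLpNorm_congr_ae hA_ae]
  -- finiteness
  have hfin1 : eLpNorm (S.indicator (⇑(Q v))) 2 μ ≠ ⊤ :=
    fun h => Lp.eLpNorm_ne_top (Q v) (top_le_iff.mp (h ▸ eLpNorm_indicator_le _))
  have hfin2 : eLpNorm (S'.indicator (⇑u)) 2 μ ≠ ⊤ :=
    fun h => Lp.eLpNorm_ne_top u (top_le_iff.mp (h ▸ eLpNorm_indicator_le _))
  -- norms
  have hnormL : ‖indMul S (unionMeasurable hAmeas L) (Q v)‖
      = (eLpNorm (S.indicator (⇑(Q v))) 2 μ).toReal := Lp.norm_toLp _ _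
  have hnormR : ‖v‖ = (eLpNorm (S'.indicator (⇑u)) 2 μ).toReal := Lp.norm_toLp _ _
  -- real version of key
  have key' : γ ^ d * ‖indMul S (unionMeasurable hAmeas L) (Q v)‖ ≤ c * ‖v‖ := by
    rw [hnormL, hnormR]
    have := ENNReal.toReal_mono (by
      exact ENNReal.mul_ne_top ENNReal.ofReal_ne_top hfin2) key
    rwa [ENNReal.toReal_mul, ENNReal.toReal_mul, ENNReal.toReal_ofReal (le_of_lt (pow_pos hγ0 d)),
      ENNReal.toReal_ofReal hc.le] at this
  have bound1 : ‖indMul S (unionMeasurable hAmeas L) (Q v)‖ ≤ c * (γ ^ d)⁻¹ * ‖v‖ := by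
    have hgd : (0:ℝ) < γ ^ d := pow_pos hγ0 d
    have h : ‖indMul S (unionMeasurable hAmeas L) (Q v)‖ ≤ c * ‖v‖ / γ ^ d := by
      rw [le_div_iff₀ hgd, mul_comm]
      exact key'
    calc ‖indMul S (unionMeasurable hAmeas L) (Q v)‖
        ≤ c * ‖v‖ / γ ^ d := h
      _ = c * (γ ^ d)⁻¹ * ‖v‖ := by ring
  have bound2 : ‖indMul S (unionMeasurable hAmeas L) (Q v)‖ ≤ 1 * ‖v‖ := by
    rw [one_mul, hnormL]
    calc (eLpNorm (S.indicator (⇑(Q v))) 2 μ).toReal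
        ≤ (eLpNorm (⇑(Q v)) 2 μ).toReal :=
          ENNReal.toReal_mono (Lp.eLpNorm_ne_top _) (eLpNorm_indicator_le _)
      _ = ‖Q v‖ := (Lp.norm_def _).symm
      _ ≤ ‖v‖ := hQ v
  rw [min_mul_of_nonneg _ _ (norm_nonneg v)]
  exact le_min bound1 bound2
end

section
/- Let μ : X → [0,∞), let p ∈ [1,∞) be a real exponent, and let C ≥ 0 be such that ∑_{x∈X} μ(x)·(γ^p)^{−δ(x,y)} ≤ C·μ(y) for every y ∈ X. Then for every v : X → ℝ: ∑_{x∈X} μ(x)·(M_γ(v)(x))^p ≤ C·∑_{x∈X} μ(x)·|v(x)|^p. -/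
/-- The maximal function `M_γ(v)(x) := max_{y ∈ X} γ^{−δ(x,y)} |v(y)|`. -/
noncomputable def Mmax {X : Type*} [Fintype X] [Nonempty X]
    (δ : X → X → ℕ) (γ : ℝ) (v : X → ℝ) (x : X) : ℝ :=
  Finset.univ.sup' Finset.univ_nonempty fun y => (γ ^ δ x y)⁻¹ * |v y|

/-- `L^p`-stability of the maximal operator `M_γ`.  Let `μ : X → [0,∞)`,
`p ∈ [1,∞)` and `C ≥ 0` be such that `∑_x μ(x) (γ^p)^{−δ(x,y)} ≤ C μ(y)` for every `y`.
Then `∑_x μ(x) (M_γ(v)(x))^p ≤ C ∑_x μ(x) |v(x)|^p` for every `v : X → ℝ`. -/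
theorem stmt_5 {X : Type*} [Fintype X] [Nonempty X]
    (δ : X → X → ℕ)
    (hδ0 : ∀ x y, δ x y = 0 ↔ x = y)
    (hδsymm : ∀ x y, δ x y = δ y x)
    (hδtri : ∀ x y z, δ x z ≤ δ x y + δ y z)
    (γ : ℝ) (hγ : 1 < γ)
    (μ : X → ℝ) (hμ : ∀ x, 0 ≤ μ x)
    (p : ℝ) (hp : 1 ≤ p)
    (C : ℝ) (hC : 0 ≤ C)
    (hbound : ∀ y, ∑ x, μ x * ((γ ^ p) ^ δ x y)⁻¹ ≤ C * μ y)
    (v : X → ℝ) :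
    ∑ x, μ x * (Mmax δ γ v x) ^ p ≤ C * ∑ x, μ x * |v x| ^ p := by
  have hγ0 : (0:ℝ) < γ := lt_trans one_pos hγ
  have hkey : ∀ x, (Mmax δ γ v x) ^ p ≤ ∑ y, ((γ ^ p) ^ δ x y)⁻¹ * |v y| ^ p := by
    intro x
    obtain ⟨y, -, hyeq⟩ := Finset.exists_mem_eq_sup' Finset.univ_nonempty
      (fun y => (γ ^ δ x y)⁻¹ * |v y|)
    have h1 : ((γ ^ δ x y)⁻¹ * |v y|) ^ p = ((γ ^ p) ^ δ x y)⁻¹ * |v y| ^ p := by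
      rw [Real.mul_rpow (by positivity) (abs_nonneg _),
        ← Real.rpow_natCast γ (δ x y), ← Real.rpow_natCast (γ ^ p) (δ x y),
        Real.inv_rpow (by positivity), ← Real.rpow_mul hγ0.le,
        ← Real.rpow_mul hγ0.le, mul_comm (δ x y : ℝ) p]
    rw [Mmax, hyeq, h1]
    exact Finset.single_le_sum (f := fun z => ((γ ^ p) ^ δ x z)⁻¹ * |v z| ^ p)
      (fun z _ => by positivity) (Finset.mem_univ y)
  calc ∑ x, μ x * (Mmax δ γ v x) ^ p
      ≤ ∑ x, μ x * ∑ y, ((γ ^ p) ^ δ x y)⁻¹ * |v y| ^ p :=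
        Finset.sum_le_sum fun x _ => mul_le_mul_of_nonneg_left (hkey x) (hμ x)
    _ = ∑ y, (∑ x, μ x * ((γ ^ p) ^ δ x y)⁻¹) * |v y| ^ p := by
        simp_rw [Finset.mul_sum, Finset.sum_mul]
        rw [Finset.sum_comm]
        exact Finset.sum_congr rfl fun y _ => Finset.sum_congr rfl fun x _ => by ring
    _ ≤ ∑ y, (C * μ y) * |v y| ^ p :=
        Finset.sum_le_sum fun y _ => mul_le_mul_of_nonneg_right (hbound y) (by positivity)
    _ = C * ∑ y, μ y * |v y| ^ p := by
        rw [Finset.mul_sum]; exact Finset.sum_congr rfl fun y _ => by ring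
end

section
/- For every u ∈ L²(μ) one has ⟨Cu, u⟩ ≤ ‖u‖₂². -/
open MeasureTheory RealInnerProductSpace

/-- Upper bound for the operator `C`.  Let `(φ_i)_{i∈I}` be a measurable
partition of unity with values in `[0,1]`, let `C_i` be the orthogonal projection onto the
closed subspace `V_i ⊆ L²(μ)` with respect to the weighted inner product `⟨φ_i ·, ·⟩`, and
let `C u = ∑_i φ_i C_i u`.  Then `⟨Cu, u⟩ ≤ ‖u‖₂²` for every `u ∈ L²(μ)`. -/
theorem stmt_6 {Ω : Type*} [MeasurableSpace Ω] (μ : Measure Ω)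
    {I : Type*} [Fintype I]
    (φ : I → Ω → ℝ) (hφmeas : ∀ i, Measurable (φ i))
    (hφ0 : ∀ i x, 0 ≤ φ i x) (hφ1 : ∀ i x, φ i x ≤ 1)
    (hφsum : ∀ᵐ x ∂μ, ∑ i, φ i x = 1)
    (V : I → Submodule ℝ (Lp ℝ 2 μ))
    (hVclosed : ∀ i, IsClosed (V i : Set (Lp ℝ 2 μ)))
    (Ci : I → (Lp ℝ 2 μ →ₗ[ℝ] Lp ℝ 2 μ))
    (hCmem : ∀ i u, Ci i u ∈ V i)
    (hCproj : ∀ i (u : Lp ℝ 2 μ), ∀ w ∈ V i,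
      ∫ x, φ i x * (Ci i u : Ω → ℝ) x * (w : Ω → ℝ) x ∂μ
        = ∫ x, φ i x * (u : Ω → ℝ) x * (w : Ω → ℝ) x ∂μ)
    (C : Lp ℝ 2 μ → Lp ℝ 2 μ)
    (hC : ∀ u : Lp ℝ 2 μ,
      (C u : Ω → ℝ) =ᵐ[μ] fun x => ∑ i, φ i x * (Ci i u : Ω → ℝ) x)
    (u : Lp ℝ 2 μ) :
    ⟪C u, u⟫ ≤ ‖u‖ ^ 2 := by
  classical
  -- integrability of φ i * g * h for g h ∈ L²
  have hint : ∀ (i : I) (g h : Lp ℝ 2 μ),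
      Integrable (fun x => φ i x * (g : Ω → ℝ) x * (h : Ω → ℝ) x) μ := by
    intro i g h
    have hgh : Integrable (fun x => (g : Ω → ℝ) x * (h : Ω → ℝ) x) μ := by
      have := L2.integrable_inner (𝕜 := ℝ) h g
      simpa [RCLike.inner_apply, conj_trivial] using this
    refine hgh.abs.mono' ?_ ?_
    · exact (((hφmeas i).aestronglyMeasurable.mul
        (Lp.aestronglyMeasurable g)).mul (Lp.aestronglyMeasurable h))
    · filter_upwards with x
      have h1 : |φ i x| ≤ 1 := by
        rw [abs_of_nonneg (hφ0 i x)]; exact hφ1 i x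
      calc ‖φ i x * (g : Ω → ℝ) x * (h : Ω → ℝ) x‖
          = |φ i x| * |(g : Ω → ℝ) x * (h : Ω → ℝ) x| := by
            rw [Real.norm_eq_abs, mul_assoc, abs_mul]
        _ ≤ 1 * |(g : Ω → ℝ) x * (h : Ω → ℝ) x| := by
            exact mul_le_mul_of_nonneg_right h1 (abs_nonneg _)
        _ = |(g : Ω → ℝ) x * (h : Ω → ℝ) x| := one_mul _
  -- step 1: expand the inner product
  have key : ⟪C u, u⟫ = ∑ i, ∫ x, φ i x * (Ci i u : Ω → ℝ) x * (u : Ω → ℝ) x ∂μ := by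
    rw [L2.inner_def]
    have hae : ∀ᵐ x ∂μ, ⟪(C u : Ω → ℝ) x, (u : Ω → ℝ) x⟫
        = ∑ i, φ i x * (Ci i u : Ω → ℝ) x * (u : Ω → ℝ) x := by
      filter_upwards [hC u] with x hx
      simp [hx, RCLike.inner_apply, conj_trivial, Finset.sum_mul]
      rw [mul_comm, Finset.sum_mul]
    rw [integral_congr_ae hae, integral_finset_sum]
    intro i _
    exact hint i (Ci i u) u
  -- step 2: per-index bound
  have hstep : ∀ i, ∫ x, φ i x * (Ci i u : Ω → ℝ) x * (u : Ω → ℝ) x ∂μ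
      ≤ ∫ x, φ i x * (u : Ω → ℝ) x * (u : Ω → ℝ) x ∂μ := by
    intro i
    set f : Ω → ℝ := fun x => (Ci i u : Ω → ℝ) x with hf
    have heq : ∫ x, φ i x * f x * f x ∂μ = ∫ x, φ i x * (u : Ω → ℝ) x * f x ∂μ :=
      hCproj i u (Ci i u) (hCmem i u)
    have hAM : ∫ x, φ i x * (u : Ω → ℝ) x * f x ∂μ
        ≤ (∫ x, φ i x * (u : Ω → ℝ) x * (u : Ω → ℝ) x ∂μ) / 2
          + (∫ x, φ i x * f x * f x ∂μ) / 2 := by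
      have hmono : ∫ x, φ i x * (u : Ω → ℝ) x * f x ∂μ
          ≤ ∫ x, (φ i x * (u : Ω → ℝ) x * (u : Ω → ℝ) x) / 2
              + (φ i x * f x * f x) / 2 ∂μ := by
        refine integral_mono (hint i u (Ci i u)) (((hint i u u).div_const 2).add
          ((hint i (Ci i u) (Ci i u)).div_const 2)) ?_
        intro x
        have h2 : 2 * (u : Ω → ℝ) x * f x ≤ (u : Ω → ℝ) x ^ 2 + f x ^ 2 :=
          two_mul_le_add_sq _ _
        nlinarith [hφ0 i x, mul_le_mul_of_nonneg_left h2 (hφ0 i x)]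
      rw [integral_add ((hint i u u).div_const 2) ((hint i (Ci i u) (Ci i u)).div_const 2),
        integral_div, integral_div] at hmono
      exact hmono
    have hcomm : ∫ x, φ i x * f x * (u : Ω → ℝ) x ∂μ
        = ∫ x, φ i x * (u : Ω → ℝ) x * f x ∂μ := by
      apply integral_congr_ae
      filter_upwards with x
      ring
    have hgoal : ∫ x, φ i x * f x * (u : Ω → ℝ) x ∂μ
        ≤ ∫ x, φ i x * (u : Ω → ℝ) x * (u : Ω → ℝ) x ∂μ := by
      rw [hcomm]
      linarith [hAM, heq]
    exact hgoal
  -- step 3: sum up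
  have hsum : ∑ i, ∫ x, φ i x * (u : Ω → ℝ) x * (u : Ω → ℝ) x ∂μ = ‖u‖ ^ 2 := by
    rw [← integral_finset_sum _ (fun i _ => hint i u u)]
    have hae : ∀ᵐ x ∂μ, ∑ i, φ i x * (u : Ω → ℝ) x * (u : Ω → ℝ) x
        = ⟪(u : Ω → ℝ) x, (u : Ω → ℝ) x⟫ := by
      filter_upwards [hφsum] with x hx
      simp only [RCLike.inner_apply, conj_trivial]
      calc ∑ i, φ i x * (u : Ω → ℝ) x * (u : Ω → ℝ) x
          = (∑ i, φ i x) * ((u : Ω → ℝ) x * (u : Ω → ℝ) x) := by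
            rw [Finset.sum_mul]; congr 1; ext i; ring
        _ = (u : Ω → ℝ) x * (u : Ω → ℝ) x := by rw [hx, one_mul]
    rw [integral_congr_ae hae, ← L2.inner_def, real_inner_self_eq_norm_sq]
  calc ⟪C u, u⟫ = ∑ i, ∫ x, φ i x * (Ci i u : Ω → ℝ) x * (u : Ω → ℝ) x ∂μ := key
    _ ≤ ∑ i, ∫ x, φ i x * (u : Ω → ℝ) x * (u : Ω → ℝ) x ∂μ :=
        Finset.sum_le_sum fun i _ => hstep i
    _ = ‖u‖ ^ 2 := hsum
end

section
/- Let V ⊆ L²(μ) be a subspace, K₁ > 0 a real, and for each i ∈ I let D_i : V → V_i be a map such that every v ∈ V satisfies v = ∑_{i∈I} φ_i·D_i v μ-a.e. and ∑_{i∈I} ∫_Ω φ_i·|D_i v|² dμ ≤ K₁·‖v‖₂². Then ‖v‖₂² ≤ K₁·⟨Cv, v⟩ for every v ∈ V. -/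
open MeasureTheory RealInnerProductSpace

/-- Lower bound for the operator `C`.  Let `(φ_i)_{i∈I}` be a measurable
partition of unity with values in `[0,1]`, `C_i` the orthogonal projection onto the closed
subspace `V_i ⊆ L²(μ)` with respect to `⟨φ_i ·, ·⟩`, and `C u = ∑_i φ_i C_i u`.  If `V` is a
subspace admitting decomposition operators `D_i : V → V_i` with `v = ∑_i φ_i D_i v` a.e. and
`∑_i ∫ φ_i |D_i v|² dμ ≤ K₁ ‖v‖₂²`, then `‖v‖₂² ≤ K₁ ⟨Cv, v⟩` for every `v ∈ V`. -/
theorem stmt_7 {Ω : Type*} [MeasurableSpace Ω] (μ : Measure Ω)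
    {I : Type*} [Fintype I]
    (φ : I → Ω → ℝ) (hφmeas : ∀ i, Measurable (φ i))
    (hφ0 : ∀ i x, 0 ≤ φ i x) (hφ1 : ∀ i x, φ i x ≤ 1)
    (hφsum : ∀ᵐ x ∂μ, ∑ i, φ i x = 1)
    (V' : I → Submodule ℝ (Lp ℝ 2 μ))
    (hVclosed : ∀ i, IsClosed (V' i : Set (Lp ℝ 2 μ)))
    (Ci : I → (Lp ℝ 2 μ →ₗ[ℝ] Lp ℝ 2 μ))
    (hCmem : ∀ i u, Ci i u ∈ V' i)
    (hCproj : ∀ i (u : Lp ℝ 2 μ), ∀ w ∈ V' i,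
      ∫ x, φ i x * (Ci i u : Ω → ℝ) x * (w : Ω → ℝ) x ∂μ
        = ∫ x, φ i x * (u : Ω → ℝ) x * (w : Ω → ℝ) x ∂μ)
    (C : Lp ℝ 2 μ → Lp ℝ 2 μ)
    (hC : ∀ u : Lp ℝ 2 μ,
      (C u : Ω → ℝ) =ᵐ[μ] fun x => ∑ i, φ i x * (Ci i u : Ω → ℝ) x)
    (V : Submodule ℝ (Lp ℝ 2 μ))
    (K₁ : ℝ) (hK₁ : 0 < K₁)
    (D : I → V → Lp ℝ 2 μ)
    (hDmem : ∀ i (v : V), D i v ∈ V' i)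
    (hdecomp : ∀ v : V,
      ((v : Lp ℝ 2 μ) : Ω → ℝ) =ᵐ[μ] fun x => ∑ i, φ i x * (D i v : Ω → ℝ) x)
    (hbound : ∀ v : V,
      ∑ i, ∫ x, φ i x * ((D i v : Ω → ℝ) x) ^ 2 ∂μ ≤ K₁ * ‖(v : Lp ℝ 2 μ)‖ ^ 2) :
    ∀ v : V, ‖(v : Lp ℝ 2 μ)‖ ^ 2 ≤ K₁ * ⟪C (v : Lp ℝ 2 μ), (v : Lp ℝ 2 μ)⟫ := by
  intro v
  set f : Lp ℝ 2 μ := (v : Lp ℝ 2 μ) with hfdef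
  -- integrability of φ i * g * h for g h ∈ L²
  have hint : ∀ (i : I) (g h : Lp ℝ 2 μ),
      Integrable (fun x => φ i x * (g : Ω → ℝ) x * (h : Ω → ℝ) x) μ := by
    intro i g h
    have h1 : Integrable (fun x => (g : Ω → ℝ) x * (h : Ω → ℝ) x) μ := by
      have := MeasureTheory.L2.integrable_inner (𝕜 := ℝ) h g
      simpa [RCLike.inner_apply] using this
    have h2 := h1.bdd_mul (hφmeas i).aestronglyMeasurable
      (c := 1) (Filter.Eventually.of_forall fun x => by
        rw [Real.norm_eq_abs, abs_of_nonneg (hφ0 i x)]; exact hφ1 i x)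
    simpa [mul_assoc] using h2
  have hintsq : ∀ (i : I) (g : Lp ℝ 2 μ),
      Integrable (fun x => φ i x * ((g : Ω → ℝ) x) ^ 2) μ := by
    intro i g
    simpa [sq, mul_assoc] using hint i g g
  -- inner product formula
  have hinner : ∀ g h : Lp ℝ 2 μ, ⟪g, h⟫ = ∫ x, (g : Ω → ℝ) x * (h : Ω → ℝ) x ∂μ := by
    intro g h
    rw [MeasureTheory.L2.inner_def]
    simp [RCLike.inner_apply]
    exact integral_congr_ae (Filter.Eventually.of_forall fun x => mul_comm _ _)
  -- Fact A: ‖f‖² = ∑ i ∫ φ i (C_i f)(D_i v)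
  have factA : ‖f‖ ^ 2 = ∑ i, ∫ x, φ i x * ((Ci i f : Ω → ℝ) x) * ((D i v : Ω → ℝ) x) ∂μ := by
    have h1 : ‖f‖ ^ 2 = ∫ x, (f : Ω → ℝ) x * (f : Ω → ℝ) x ∂μ := by
      rw [← real_inner_self_eq_norm_sq, hinner]
    have h2 : ∫ x, (f : Ω → ℝ) x * (f : Ω → ℝ) x ∂μ
        = ∫ x, ∑ i, φ i x * ((D i v : Ω → ℝ) x) * ((f : Ω → ℝ) x) ∂μ := by
      refine integral_congr_ae ?_
      filter_upwards [hdecomp v] with x hx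
      calc (f : Ω → ℝ) x * (f : Ω → ℝ) x
          = (∑ i, φ i x * (D i v : Ω → ℝ) x) * (f : Ω → ℝ) x := by rw [← hx]
        _ = ∑ i, φ i x * ((D i v : Ω → ℝ) x) * ((f : Ω → ℝ) x) := by
            rw [Finset.sum_mul]
    have h3 : ∫ x, ∑ i, φ i x * ((D i v : Ω → ℝ) x) * ((f : Ω → ℝ) x) ∂μ
        = ∑ i, ∫ x, φ i x * ((D i v : Ω → ℝ) x) * ((f : Ω → ℝ) x) ∂μ :=
      integral_finset_sum _ (fun i _ => hint i (D i v) f)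
    have h4 : ∀ i, ∫ x, φ i x * ((D i v : Ω → ℝ) x) * ((f : Ω → ℝ) x) ∂μ
        = ∫ x, φ i x * ((Ci i f : Ω → ℝ) x) * ((D i v : Ω → ℝ) x) ∂μ := by
      intro i
      rw [hCproj i f (D i v) (hDmem i v)]
      refine integral_congr_ae (Filter.Eventually.of_forall fun x => ?_)
      ring
    rw [h1, h2, h3]
    exact Finset.sum_congr rfl fun i _ => h4 i
  -- Fact B: ⟪C f, f⟫ = ∑ i ∫ φ i (C_i f)²
  have factB : ⟪C f, f⟫ = ∑ i, ∫ x, φ i x * ((Ci i f : Ω → ℝ) x) ^ 2 ∂μ := by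
    rw [hinner]
    have h2 : ∫ x, (C f : Ω → ℝ) x * (f : Ω → ℝ) x ∂μ
        = ∫ x, ∑ i, φ i x * ((Ci i f : Ω → ℝ) x) * ((f : Ω → ℝ) x) ∂μ := by
      refine integral_congr_ae ?_
      filter_upwards [hC f] with x hx
      rw [hx, Finset.sum_mul]
    rw [h2, integral_finset_sum _ (fun i _ => hint i (Ci i f) f)]
    refine Finset.sum_congr rfl fun i _ => ?_
    calc ∫ x, φ i x * ((Ci i f : Ω → ℝ) x) * ((f : Ω → ℝ) x) ∂μ
        = ∫ x, φ i x * ((f : Ω → ℝ) x) * ((Ci i f : Ω → ℝ) x) ∂μ := by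
          refine integral_congr_ae (Filter.Eventually.of_forall fun x => ?_); ring
      _ = ∫ x, φ i x * ((Ci i f : Ω → ℝ) x) * ((Ci i f : Ω → ℝ) x) ∂μ :=
          (hCproj i f (Ci i f) (hCmem i f)).symm
      _ = ∫ x, φ i x * ((Ci i f : Ω → ℝ) x) ^ 2 ∂μ := by
          refine integral_congr_ae (Filter.Eventually.of_forall fun x => ?_); ring
  -- per-i AM-GM bound
  have key : ∀ i, ∫ x, φ i x * ((Ci i f : Ω → ℝ) x) * ((D i v : Ω → ℝ) x) ∂μ
      ≤ (K₁ * ∫ x, φ i x * ((Ci i f : Ω → ℝ) x) ^ 2 ∂μ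
          + (1 / K₁) * ∫ x, φ i x * ((D i v : Ω → ℝ) x) ^ 2 ∂μ) / 2 := by
    intro i
    rw [← integral_const_mul, ← integral_const_mul]
    rw [← integral_add ((hintsq i (Ci i f)).const_mul _) ((hintsq i (D i v)).const_mul _)]
    rw [← integral_div]
    refine integral_mono (hint i (Ci i f) (D i v)) ?_ ?_
    · exact (((hintsq i (Ci i f)).const_mul _).add ((hintsq i (D i v)).const_mul _)).div_const _
    · intro x
      have hφ := hφ0 i x
      set c := (Ci i f : Ω → ℝ) x
      set d := (D i v : Ω → ℝ) x
      have h : 0 ≤ (1 / K₁) * (φ i x * (K₁ * c - d) ^ 2) := by positivity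
      have hid : (1 / K₁) * (φ i x * (K₁ * c - d) ^ 2)
          = K₁ * (φ i x * c ^ 2) - 2 * (φ i x * c * d) + (1 / K₁) * (φ i x * d ^ 2) := by
        field_simp
        ring
      rw [hid] at h
      linarith
  have hsum := Finset.sum_le_sum (fun i (_ : i ∈ Finset.univ) => key i)
  rw [← factA] at hsum
  have e1 : (∑ i, (K₁ * ∫ x, φ i x * ((Ci i f : Ω → ℝ) x) ^ 2 ∂μ
      + (1 / K₁) * ∫ x, φ i x * ((D i v : Ω → ℝ) x) ^ 2 ∂μ) / 2)
      = (K₁ * ∑ i, ∫ x, φ i x * ((Ci i f : Ω → ℝ) x) ^ 2 ∂μ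
        + (1 / K₁) * ∑ i, ∫ x, φ i x * ((D i v : Ω → ℝ) x) ^ 2 ∂μ) / 2 := by
    rw [← Finset.sum_div, Finset.sum_add_distrib, ← Finset.mul_sum, ← Finset.mul_sum]
  rw [e1, ← factB] at hsum
  have hB := hbound v
  have h5 : (1 / K₁) * (∑ i, ∫ x, φ i x * ((D i v : Ω → ℝ) x) ^ 2 ∂μ)
      ≤ (1 / K₁) * (K₁ * ‖f‖ ^ 2) := by
    exact mul_le_mul_of_nonneg_left hB (by positivity)
  have h6 : (1 / K₁) * (K₁ * ‖f‖ ^ 2) = ‖f‖ ^ 2 := by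
    field_simp
  linarith
end

section
/- For every multi-index γ ∈ ℕ^{d+1} with k := |γ| ≤ K and every j ∈ {0,…,d}: X_j·D_j(X^γ·s^{K−k}) = (γ_j/K)·X^γ·s^{K−k} + ((K−k)/K)·X_j·X^γ·s^{K−k−1}, where for k = K the second summand is interpreted as 0. -/
open MvPolynomial

/-- The decomposition operator `D_j`, acting on a monomial `X^α` by
`D_j(X^α) = (α_j/K)·X^{α−e_j}` (which is `0` when `α_j = 0`) and extended linearly. -/
noncomputable def Dop (d K : ℕ) (j : Fin (d + 1))
    (p : MvPolynomial (Fin (d + 1)) ℝ) : MvPolynomial (Fin (d + 1)) ℝ :=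
  ∑ α ∈ p.support,
    MvPolynomial.monomial (α - Finsupp.single j 1) (((α j : ℝ) / (K : ℝ)) * p.coeff α)

lemma X_mul_Dop (d K : ℕ) (j : Fin (d + 1)) (p : MvPolynomial (Fin (d + 1)) ℝ) :
    MvPolynomial.X j * Dop d K j p = (K : ℝ)⁻¹ • (MvPolynomial.X j * pderiv j p) := by
  conv_rhs => rw [p.as_sum]
  rw [map_sum, Dop, Finset.mul_sum, Finset.mul_sum, Finset.smul_sum]
  refine Finset.sum_congr rfl fun α _ => ?_
  rw [pderiv_monomial, ← mul_smul_comm, smul_monomial, smul_eq_mul]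
  congr 1
  ring

lemma X_mul_pderiv_monomial (d : ℕ) (j : Fin (d + 1)) (γ : Fin (d + 1) →₀ ℕ) :
    MvPolynomial.X j * pderiv j (MvPolynomial.monomial γ (1 : ℝ))
      = MvPolynomial.monomial γ ((γ j : ℝ)) := by
  rw [pderiv_monomial, one_mul]
  rcases Nat.eq_zero_or_pos (γ j) with h | h
  · simp [h]
  · have hγ : Finsupp.single j 1 + (γ - Finsupp.single j 1) = γ := by
      ext i
      rcases eq_or_ne i j with rfl | hi
      · simp [Finsupp.single_apply]
        omega
      · simp only [Finsupp.add_apply, Finsupp.tsub_apply, Finsupp.single_apply,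
          if_neg (Ne.symm hi)]
        omega
    rw [X, monomial_mul, one_mul, hγ]

/-- Action of `D_j` on lower order monomials.  For every multi-index `γ`
with `k = |γ| ≤ K` and every `j`:
`X_j D_j(X^γ s^{K−k}) = (γ_j/K) X^γ s^{K−k} + ((K−k)/K) X_j X^γ s^{K−k−1}`. -/
theorem stmt_8 (d K : ℕ) (hd : 1 ≤ d) (hK : 1 ≤ K)
    (γ : Fin (d + 1) →₀ ℕ) (k : ℕ) (hk : k = ∑ i, γ i) (hkK : k ≤ K)
    (j : Fin (d + 1)) :
    (MvPolynomial.X j : MvPolynomial (Fin (d + 1)) ℝ)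
        * Dop d K j (MvPolynomial.monomial γ 1 * (∑ i, MvPolynomial.X i) ^ (K - k))
      = ((γ j : ℝ) / (K : ℝ))
          • (MvPolynomial.monomial γ 1 * (∑ i, MvPolynomial.X i) ^ (K - k))
        + (((K - k : ℕ) : ℝ) / (K : ℝ))
          • (MvPolynomial.X j * MvPolynomial.monomial γ 1
              * (∑ i, MvPolynomial.X i) ^ (K - k - 1)) := by
  have hs : pderiv j (∑ i, (MvPolynomial.X i : MvPolynomial (Fin (d + 1)) ℝ)) = 1 := by
    rw [map_sum]
    simp [pderiv_X, Pi.single_apply, Finset.sum_ite_eq']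
  rw [X_mul_Dop, pderiv_mul, pderiv_pow, hs, mul_one, mul_add,
      ← mul_assoc, X_mul_pderiv_monomial]
  have h1 : (MvPolynomial.monomial γ ((γ j : ℝ)))
      = (γ j : ℝ) • MvPolynomial.monomial γ (1 : ℝ) := by
    rw [smul_monomial, smul_eq_mul, mul_one]
  rw [h1]
  have h2 : (MvPolynomial.X j * (MvPolynomial.monomial γ (1:ℝ) *
      (((K - k : ℕ) : MvPolynomial (Fin (d+1)) ℝ) * (∑ i, MvPolynomial.X i) ^ (K - k - 1))))
      = ((K - k : ℕ) : ℝ) • (MvPolynomial.X j * MvPolynomial.monomial γ 1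
          * (∑ i, MvPolynomial.X i) ^ (K - k - 1)) := by
    rw [smul_eq_C_mul, ← MvPolynomial.C_eq_coe_nat]
    ring
  rw [h2, smul_add, smul_mul_assoc, smul_smul, smul_smul, div_eq_inv_mul, div_eq_inv_mul]
end

section
/- Assume d ≥ 2 and set ψ_j(x) := 1 − d·λ_j(x) for j = 0,…,d. Then for every (v_0,…,v_d) ∈ ℝ^{d+1}: ∑_{j=0}^{d} v_j²·∫_T ψ_j(x)² dx ≤ ((d²−d+2)/(d+2))·∫_T (∑_{j=0}^{d} v_j·ψ_j(x))² dx, and ∫_T (∑_{j=0}^{d} v_j·ψ_j(x))² dx ≤ (d²/(d²−d+2))·∑_{j=0}^{d} v_j²·∫_T ψ_j(x)² dx. -/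
open MeasureTheory

/-- The standard simplex `T = {x ∈ ℝ^d : x_i ≥ 0, ∑ x_i ≤ 1}`. -/
def Tset (d : ℕ) : Set (Fin d → ℝ) := {x | (∀ i, 0 ≤ x i) ∧ ∑ i, x i ≤ 1}

lemma isClosed_Tset (d : ℕ) : IsClosed (Tset d) := by
  have h1 : IsClosed {x : Fin d → ℝ | ∀ i, 0 ≤ x i} :=
    by
    have : {x : Fin d → ℝ | ∀ i, 0 ≤ x i} = ⋂ i, {x | 0 ≤ x i} := by ext x; simp [Set.mem_iInter]
    rw [this]
    exact isClosed_iInter fun i => isClosed_le continuous_const (continuous_apply i)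
  have h2 : IsClosed {x : Fin d → ℝ | ∑ i, x i ≤ 1} :=
    isClosed_le (by continuity) continuous_const
  exact h1.inter h2

lemma isCompact_Tset (d : ℕ) : IsCompact (Tset d) := by
  refine IsCompact.of_isClosed_subset (isCompact_Icc (a := (0 : Fin d → ℝ)) (b := 1))
    (isClosed_Tset d) ?_
  rintro x ⟨hx, hs⟩
  constructor
  · intro i; exact hx i
  · intro i
    calc x i ≤ ∑ j, x j := Finset.single_le_sum (fun j _ => hx j) (Finset.mem_univ i)
    _ ≤ 1 := hs

lemma measurableSet_Tset (d : ℕ) : MeasurableSet (Tset d) := (isClosed_Tset d).measurableSet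

lemma integrableOn_Tset {d : ℕ} {f : (Fin d → ℝ) → ℝ} (hf : Continuous f) :
    IntegrableOn f (Tset d) volume :=
  hf.continuousOn.integrableOn_compact (isCompact_Tset d)
open scoped Interval

set_option maxHeartbeats 1000000 in
lemma master (d k n : ℕ) (g : (Fin d → ℝ) → ℝ) (hg : Continuous g)
    (hom : ∀ (c : ℝ), 0 < c → ∀ y, g (c • y) = c ^ n * g y) :
    ∫ x in Tset (d+1), (x 0)^k * g (Fin.tail x) =
      (∫ t in (0:ℝ)..1, t^k * (1-t)^(d+n)) * ∫ y in Tset d, g y := by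
  classical
  set M : ℝ := ∫ y in Tset d, g y with hM
  set S : Set (ℝ × (Fin d → ℝ)) :=
    {p | 0 ≤ p.1 ∧ (∀ i, 0 ≤ p.2 i) ∧ p.1 + ∑ i, p.2 i ≤ 1} with hS
  -- S is compact
  have hSclosed : IsClosed S := by
    have h1 : IsClosed {p : ℝ × (Fin d → ℝ) | 0 ≤ p.1} :=
      isClosed_le continuous_const continuous_fst
    have h2 : IsClosed {p : ℝ × (Fin d → ℝ) | ∀ i, 0 ≤ p.2 i} := by
      have : {p : ℝ × (Fin d → ℝ) | ∀ i, 0 ≤ p.2 i} = ⋂ i, {p | 0 ≤ p.2 i} := by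
        ext p; simp [Set.mem_iInter]
      rw [this]
      exact isClosed_iInter fun i =>
        isClosed_le continuous_const ((continuous_apply i).comp continuous_snd)
    have h3 : IsClosed {p : ℝ × (Fin d → ℝ) | p.1 + ∑ i, p.2 i ≤ 1} :=
      isClosed_le (continuous_fst.add
        (continuous_finset_sum _ fun i _ => (continuous_apply i).comp continuous_snd))
        continuous_const
    have : S = ({p : ℝ × (Fin d → ℝ) | 0 ≤ p.1} ∩ {p | ∀ i, 0 ≤ p.2 i}) ∩
        {p | p.1 + ∑ i, p.2 i ≤ 1} := by
      ext p; simp only [hS, Set.mem_setOf_eq, Set.mem_inter_iff]; tauto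
    rw [this]
    exact (h1.inter h2).inter h3
  have hScompact : IsCompact S := by
    refine IsCompact.of_isClosed_subset
      (isCompact_Icc (a := ((0:ℝ), (0 : Fin d → ℝ))) (b := (1, 1))) hSclosed ?_
    rintro ⟨t, y⟩ ⟨ht, hy, hs⟩
    simp only at ht hy hs
    have hsum : 0 ≤ ∑ i, y i := Finset.sum_nonneg fun i _ => hy i
    simp only [Set.mem_Icc, Prod.mk_le_mk, Pi.le_def]
    have hle1 : ∀ i, y i ≤ 1 := by
      intro i
      have : y i ≤ ∑ j, y j := Finset.single_le_sum (fun j _ => hy j) (Finset.mem_univ i)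
      linarith
    exact ⟨⟨ht, fun i => hy i⟩, by linarith, fun i => hle1 i⟩
  have hφ : Continuous (fun p : ℝ × (Fin d → ℝ) => p.1 ^ k * g p.2) :=
    (continuous_fst.pow k).mul (hg.comp continuous_snd)
  set G : ℝ × (Fin d → ℝ) → ℝ := S.indicator (fun p => p.1 ^ k * g p.2) with hG
  have hGint : Integrable G (volume.prod volume) := by
    rw [hG, ← MeasureTheory.Measure.volume_eq_prod, integrable_indicator_iff hSclosed.measurableSet]
    exact hφ.continuousOn.integrableOn_compact hScompact
  -- step A : rewrite LHS as ∫ G over the product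
  have stepA : (∫ x in Tset (d+1), (x 0)^k * g (Fin.tail x)) = ∫ p, G p ∂(volume.prod volume) := by
    rw [← integral_indicator (measurableSet_Tset (d+1))]
    have epres := (volume_preserving_piFinSuccAbove (fun _ : Fin (d+1) => ℝ) 0).symm
    rw [← epres.integral_comp (MeasurableEquiv.measurableEmbedding _)
      ((Tset (d+1)).indicator (fun x => (x 0)^k * g (Fin.tail x)))]
    refine integral_congr_ae (Filter.Eventually.of_forall fun p => ?_)
    obtain ⟨t, y⟩ := p
    have hsymm : (MeasurableEquiv.piFinSuccAbove (fun _ : Fin (d+1) => ℝ) 0).symm (t, y)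
        = Fin.cons t y := by
      simp [MeasurableEquiv.piFinSuccAbove_symm_apply, Fin.insertNthEquiv, Fin.insertNth_zero]
    change (Tset (d+1)).indicator (fun x => (x 0)^k * g (Fin.tail x))
        ((MeasurableEquiv.piFinSuccAbove (fun _ : Fin (d+1) => ℝ) 0).symm (t, y)) = G (t, y)
    rw [hsymm]
    have hmem : (Fin.cons t y : Fin (d+1) → ℝ) ∈ Tset (d+1) ↔ (t, y) ∈ S := by
      simp only [Tset, Set.mem_setOf_eq, hS, Fin.sum_cons, Fin.forall_fin_succ,
        Fin.cons_zero, Fin.cons_succ]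
      tauto
    by_cases h : (t, y) ∈ S
    · rw [hG, Set.indicator_of_mem (hmem.mpr h), Set.indicator_of_mem h]
      simp [Fin.tail_cons]
    · rw [hG, Set.indicator_of_notMem (fun hc => h (hmem.mp hc)),
        Set.indicator_of_notMem h]
  -- step D : inner integral
  have inner : ∀ t : ℝ, t ≠ 1 →
      (∫ y, G (t, y)) = (Set.Ico (0:ℝ) 1).indicator
        (fun t => t^k * (1-t)^(d+n) * M) t := by
    intro t ht1
    by_cases htI : t ∈ Set.Ico (0:ℝ) 1
    · obtain ⟨ht0, ht1'⟩ := htI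
      set c : ℝ := 1 - t with hc
      have hcpos : 0 < c := by rw [hc]; linarith
      have key : ∀ y : Fin d → ℝ, G (t, y) =
          t ^ k * (c ^ n * ((Tset d).indicator g (c⁻¹ • y))) := by
        intro y
        have hmem : (t, y) ∈ S ↔ (c⁻¹ • y) ∈ Tset d := by
          simp only [hS, Set.mem_setOf_eq, Tset, Pi.smul_apply, smul_eq_mul]
          constructor
          · rintro ⟨-, hy, hsle⟩
            refine ⟨fun i => mul_nonneg (inv_nonneg.mpr hcpos.le) (hy i), ?_⟩
            rw [← Finset.mul_sum, inv_mul_le_iff₀ hcpos, mul_one]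
            linarith
          · rintro ⟨hy, hsle⟩
            rw [← Finset.mul_sum, inv_mul_le_iff₀ hcpos, mul_one] at hsle
            refine ⟨ht0, fun i => ?_, by linarith⟩
            have h2 : 0 ≤ c * (c⁻¹ * y i) := mul_nonneg hcpos.le (hy i)
            rwa [← mul_assoc, mul_inv_cancel₀ hcpos.ne', one_mul] at h2
        by_cases h : (t, y) ∈ S
        · rw [hG, Set.indicator_of_mem h, Set.indicator_of_mem (hmem.mp h)]
          have hgy : g y = c ^ n * g (c⁻¹ • y) := by
            have h2 := hom c hcpos (c⁻¹ • y)
            rw [smul_smul, mul_inv_cancel₀ hcpos.ne', one_smul] at h2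
            linarith
          rw [hgy]
        · rw [hG, Set.indicator_of_notMem h,
            Set.indicator_of_notMem (fun hc' => h (hmem.mpr hc'))]
          ring
      simp only [key]
      rw [integral_const_mul, integral_const_mul,
        MeasureTheory.Measure.integral_comp_smul volume ((Tset d).indicator g) c⁻¹,
        Set.indicator_of_mem (Set.mem_Ico.mpr ⟨ht0, ht1'⟩),
        integral_indicator (measurableSet_Tset d), ← hM]
      have hfr : Module.finrank ℝ (Fin d → ℝ) = d := Module.finrank_fin_fun ℝ
      rw [hfr, inv_pow, inv_inv, abs_of_nonneg (pow_nonneg hcpos.le d)]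
      simp only [smul_eq_mul]
      ring
    · rw [Set.indicator_of_notMem htI]
      have hz : ∀ y : Fin d → ℝ, G (t, y) = 0 := by
        intro y
        rw [hG, Set.indicator_of_notMem]
        rintro ⟨ht0, hy, hsle⟩
        have hsum : 0 ≤ ∑ i, y i := Finset.sum_nonneg fun i _ => hy i
        rw [Set.mem_Ico, not_and_or] at htI
        rcases htI with h | h
        · exact h ht0
        · push_neg at h
          have hlt : 1 < t := lt_of_le_of_ne h (Ne.symm ht1)
          linarith
      simp [hz]
  rw [stepA, MeasureTheory.integral_prod G hGint]
  have hae : (fun t => ∫ y, G (t, y)) =ᵐ[volume]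
      (Set.Ico (0:ℝ) 1).indicator (fun t => t^k * (1-t)^(d+n) * M) := by
    have h1 : ∀ᵐ t : ℝ, t ≠ 1 := by
      rw [MeasureTheory.ae_iff]
      have he : {t : ℝ | ¬ t ≠ 1} = {1} := by ext t; simp
      rw [he]
      exact Real.volume_singleton
    filter_upwards [h1] with t ht using inner t ht
  rw [integral_congr_ae hae, integral_indicator measurableSet_Ico,
    setIntegral_congr_set Ico_ae_eq_Ioc,
    ← intervalIntegral.integral_of_le (zero_le_one), ← intervalIntegral.integral_mul_const]

lemma B0 (n : ℕ) : ∫ t in (0:ℝ)..1, (1-t)^n = 1/(n+1) := by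
  have h : ∫ t in (0:ℝ)..1, (1-t)^n = ∫ t in (0:ℝ)..1, t^n := by
    have := intervalIntegral.integral_comp_sub_left (a := (0:ℝ)) (b := 1)
      (fun u => u ^ n) 1
    simpa using this
  rw [h, integral_pow]
  simp

lemma B1 (n : ℕ) : ∫ t in (0:ℝ)..1, t*(1-t)^n = 1/((n+1)*(n+2)) := by
  have h : ∫ t in (0:ℝ)..1, t*(1-t)^n = ∫ t in (0:ℝ)..1, (1-t)*t^n := by
    have := intervalIntegral.integral_comp_sub_left (a := (0:ℝ)) (b := 1)
      (fun u => (1-u) * u ^ n) 1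
    simpa [mul_comm] using this
  rw [h]
  have h2 : ∀ t : ℝ, (1-t)*t^n = t^n - t^(n+1) := by intro t; ring
  simp_rw [h2]
  rw [intervalIntegral.integral_sub ((continuous_pow n).intervalIntegrable 0 1)
    ((continuous_pow (n+1)).intervalIntegrable 0 1), integral_pow, integral_pow]
  have hn1 : ((n:ℝ)+1) ≠ 0 := by positivity
  have hn2 : ((n:ℝ)+2) ≠ 0 := by positivity
  push_cast
  field_simp
  simp only [one_pow, ne_eq, add_eq_zero, one_ne_zero, and_false, not_false_eq_true, zero_pow, sub_zero]
  ring

lemma B2 (n : ℕ) : ∫ t in (0:ℝ)..1, t^2*(1-t)^n = (2:ℝ)/(((n:ℝ)+1)*((n:ℝ)+2)*((n:ℝ)+3)) := by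
  have h : ∫ t in (0:ℝ)..1, t^2*(1-t)^n = ∫ t in (0:ℝ)..1, (1-t)^2*t^n := by
    have h0 := intervalIntegral.integral_comp_sub_left (a := (0:ℝ)) (b := 1)
      (fun u => (1-u)^2 * u ^ n) 1
    simp only [sub_sub_cancel, sub_zero, sub_self] at h0
    rw [← h0]
  rw [h]
  have h2 : ∀ t : ℝ, (1-t)^2*t^n = t^n - 2*t^(n+1) + t^(n+2) := by intro t; ring
  simp_rw [h2]
  rw [intervalIntegral.integral_add (((continuous_pow n).intervalIntegrable 0 1).sub
      (Continuous.intervalIntegrable (u := fun t : ℝ => 2 * t^(n+1)) (continuous_const.mul (continuous_pow (n+1))) 0 1))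
      ((continuous_pow (n+2)).intervalIntegrable 0 1),
    intervalIntegral.integral_sub ((continuous_pow n).intervalIntegrable 0 1)
      (Continuous.intervalIntegrable (u := fun t : ℝ => 2 * t^(n+1)) (continuous_const.mul (continuous_pow (n+1))) 0 1),
    intervalIntegral.integral_const_mul, integral_pow, integral_pow, integral_pow]
  have hn1 : ((n:ℝ)+1) ≠ 0 := by positivity
  have hn2 : ((n:ℝ)+2) ≠ 0 := by positivity
  have hn3 : ((n:ℝ)+3) ≠ 0 := by positivity
  push_cast
  field_simp
  ring

lemma moment0 : ∀ d : ℕ, (∫ _x in Tset d, (1:ℝ)) = 1 / (Nat.factorial d : ℝ) := by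
  intro d
  induction d with
  | zero =>
    have h : Tset 0 = Set.univ := by
      ext x
      simp [Tset]
    rw [h, setIntegral_univ, integral_const]
    have : (volume : Measure (Fin 0 → ℝ)) Set.univ = 1 := by
      rw [volume_pi, Measure.pi_univ]
      simp
    simp [Measure.real, this]
  | succ d ih =>
    have h := master d 0 0 (fun _ => (1:ℝ)) continuous_const
      (by intro c hc y; simp)
    simp only [pow_zero, one_mul, mul_one, Nat.add_zero] at h
    rw [h, ih, B0]
    rw [Nat.factorial_succ]
    push_cast
    have h1 : ((d:ℝ)+1) ≠ 0 := by positivity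
    have h2 : (Nat.factorial d : ℝ) ≠ 0 := Nat.cast_ne_zero.mpr (Nat.factorial_ne_zero d)
    field_simp

lemma moment1 : ∀ d : ℕ, ∀ i : Fin d, ∫ x in Tset d, x i = 1 / (Nat.factorial (d+1) : ℝ) := by
  intro d
  induction d with
  | zero => exact fun i => i.elim0
  | succ d ih =>
    intro i
    have hfd : (Nat.factorial d : ℝ) ≠ 0 := Nat.cast_ne_zero.mpr (Nat.factorial_ne_zero d)
    have h1 : ((d:ℝ)+1) ≠ 0 := by positivity
    have h2 : ((d:ℝ)+2) ≠ 0 := by positivity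
    induction i using Fin.cases with
    | zero =>
      have h := master d 1 0 (fun _ => (1:ℝ)) continuous_const (by intro c hc y; simp)
      simp only [mul_one, pow_one, Nat.add_zero] at h
      rw [h, moment0, B1, Nat.factorial_succ (d+1), Nat.factorial_succ d]
      push_cast
      field_simp
      ring
    | succ j =>
      have h := master d 0 1 (fun y => y j) (continuous_apply j)
        (by intro c hc y; simp)
      simp only [pow_zero, one_mul] at h
      have hshape : ∀ x : Fin (d+1) → ℝ, Fin.tail x j = x j.succ := fun x => rfl
      simp only [hshape] at h
      rw [h, ih j, B0]
      rw [Nat.factorial_succ (d+1)]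
      push_cast
      field_simp

lemma moment2 : ∀ d : ℕ, ∀ i j : Fin d, (∫ x in Tset d, x i * x j)
    = (if i = j then (2:ℝ) else 1) / (Nat.factorial (d+2) : ℝ) := by
  intro d
  induction d with
  | zero => exact fun i => i.elim0
  | succ d ih =>
    intro i j
    have hfd : (Nat.factorial d : ℝ) ≠ 0 := Nat.cast_ne_zero.mpr (Nat.factorial_ne_zero d)
    have hfd1 : (Nat.factorial (d+1) : ℝ) ≠ 0 := Nat.cast_ne_zero.mpr (Nat.factorial_ne_zero _)
    have h1 : ((d:ℝ)+1) ≠ 0 := by positivity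
    have h2 : ((d:ℝ)+2) ≠ 0 := by positivity
    have h3 : ((d:ℝ)+3) ≠ 0 := by positivity
    induction i using Fin.cases with
    | zero =>
      induction j using Fin.cases with
      | zero =>
        have h := master d 2 0 (fun _ => (1:ℝ)) continuous_const (by intro c hc y; simp)
        simp only [mul_one, Nat.add_zero] at h
        have hsq : (∫ x in Tset (d+1), x 0 * x 0) = ∫ x in Tset (d+1), (x 0)^2 :=
          integral_congr_ae (Filter.Eventually.of_forall fun x => (sq (x 0)).symm)
        rw [hsq, h, moment0, B2, if_pos rfl, Nat.factorial_succ (d+2), Nat.factorial_succ (d+1),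
          Nat.factorial_succ d]
        push_cast
        field_simp
        ring
      | succ j =>
        have h := master d 1 1 (fun y => y j) (continuous_apply j) (by intro c hc y; simp)
        simp only [pow_one] at h
        have hshape : ∀ x : Fin (d+1) → ℝ, x 0 * Fin.tail x j = x 0 * x j.succ := fun x => rfl
        simp only [hshape] at h
        rw [h, moment1, B1, if_neg (Ne.symm (Fin.succ_ne_zero j)),
          Nat.factorial_succ (d+2), Nat.factorial_succ (d+1)]
        push_cast
        field_simp
        ring
    | succ i =>
      induction j using Fin.cases with
      | zero =>
        have hcomm : (∫ x in Tset (d+1), x i.succ * x 0) = ∫ x in Tset (d+1), x 0 * x i.succ :=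
          integral_congr_ae (Filter.Eventually.of_forall fun x => mul_comm (x i.succ) (x 0))
        rw [hcomm]
        have h := master d 1 1 (fun y => y i) (continuous_apply i) (by intro c hc y; simp)
        simp only [pow_one] at h
        have hshape : ∀ x : Fin (d+1) → ℝ, x 0 * Fin.tail x i = x 0 * x i.succ := fun x => rfl
        simp only [hshape] at h
        rw [h, moment1, B1, if_neg (Fin.succ_ne_zero i),
          Nat.factorial_succ (d+2), Nat.factorial_succ (d+1)]
        push_cast
        field_simp
        ring
      | succ j =>
        have h := master d 0 2 (fun y => y i * y j)
          ((continuous_apply i).mul (continuous_apply j))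
          (by intro c hc y; simp; ring)
        simp only [pow_zero, one_mul] at h
        have hshape : ∀ x : Fin (d+1) → ℝ, Fin.tail x i * Fin.tail x j = x i.succ * x j.succ :=
          fun x => rfl
        simp only [hshape] at h
        rw [h, ih i j, B0, Nat.factorial_succ (d+2)]
        simp only [Fin.succ_inj]
        push_cast
        split_ifs
        · field_simp
        · field_simp

/-- The barycentric coordinates `λ(x) = (1 − ∑ x_i, x_1, …, x_d)`. -/
noncomputable def lam (d : ℕ) (x : Fin d → ℝ) : Fin (d + 1) → ℝ :=
  Fin.cons (1 - ∑ i, x i) x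

lemma sum_ite_two (d : ℕ) (k : Fin d) : (∑ i : Fin d, (if i = k then (2:ℝ) else 1)) = d + 1 := by
  have h : ∀ i : Fin d, (if i = k then (2:ℝ) else 1) = 1 + (if i = k then 1 else 0) := by
    intro i; split_ifs <;> norm_num
  simp_rw [h]
  rw [Finset.sum_add_distrib, Finset.sum_const, Finset.card_univ, Fintype.card_fin,
    Finset.sum_ite_eq' Finset.univ k (fun _ => (1:ℝ))]
  simp

lemma int_sum (d : ℕ) : (∫ x in Tset d, ∑ i, x i) = d / (Nat.factorial (d+1) : ℝ) := by
  rw [integral_finset_sum _ (fun i _ => integrableOn_Tset (continuous_apply i))]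
  simp_rw [moment1]
  rw [Finset.sum_const, Finset.card_univ, Fintype.card_fin, nsmul_eq_mul]
  ring

lemma int_cross (d : ℕ) (k : Fin d) :
    (∫ x in Tset d, (∑ i, x i) * x k) = ((d:ℝ)+1) / (Nat.factorial (d+2) : ℝ) := by
  have he : (∫ x in Tset d, (∑ i, x i) * x k) = ∫ x in Tset d, ∑ i, x i * x k :=
    integral_congr_ae (Filter.Eventually.of_forall fun x => Finset.sum_mul ..)
  rw [he, integral_finset_sum _
    (fun i _ => integrableOn_Tset (f := fun x : Fin d → ℝ => x i * x k) ((continuous_apply i).mul (continuous_apply k)))]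
  simp_rw [moment2]
  rw [← Finset.sum_div, sum_ite_two]

lemma int_sumsq (d : ℕ) :
    (∫ x in Tset d, (∑ i, x i) * (∑ i, x i)) = ((d:ℝ)^2+d) / (Nat.factorial (d+2) : ℝ) := by
  have he : (∫ x in Tset d, (∑ i, x i) * (∑ i, x i))
      = ∫ x in Tset d, ∑ i, (∑ j, x j) * x i :=
    integral_congr_ae (Filter.Eventually.of_forall fun x => by simp only [Finset.mul_sum])
  rw [he, integral_finset_sum _ (fun i _ => integrableOn_Tset (f := fun x : Fin d → ℝ => (∑ j, x j) * x i)
    ((continuous_finset_sum _ fun j _ => continuous_apply j).mul (continuous_apply i)))]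
  simp_rw [int_cross]
  rw [Finset.sum_const, Finset.card_univ, Fintype.card_fin, nsmul_eq_mul]
  ring

lemma L1 (d : ℕ) (j : Fin (d+1)) :
    (∫ x in Tset d, lam d x j) = 1 / (Nat.factorial (d+1) : ℝ) := by
  induction j using Fin.cases with
  | zero =>
    have he : (∫ x in Tset d, lam d x 0) = ∫ x in Tset d, ((1:ℝ) - ∑ i, x i) :=
      integral_congr_ae (Filter.Eventually.of_forall fun x => by simp [lam])
    rw [he, integral_sub (integrableOn_Tset continuous_const)
      (integrableOn_Tset (continuous_finset_sum _ fun i _ => continuous_apply i)),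
      moment0, int_sum, Nat.factorial_succ]
    have h1 : ((d:ℝ)+1) ≠ 0 := by positivity
    have hfd : (Nat.factorial d : ℝ) ≠ 0 := Nat.cast_ne_zero.mpr (Nat.factorial_ne_zero d)
    push_cast
    field_simp
    ring
  | succ j =>
    have he : (∫ x in Tset d, lam d x j.succ) = ∫ x in Tset d, x j :=
      integral_congr_ae (Filter.Eventually.of_forall fun x => by simp [lam])
    rw [he, moment1]

lemma L2 (d : ℕ) (j k : Fin (d+1)) : (∫ x in Tset d, lam d x j * lam d x k)
    = (if j = k then (2:ℝ) else 1) / (Nat.factorial (d+2) : ℝ) := by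
  have hfd : (Nat.factorial d : ℝ) ≠ 0 := Nat.cast_ne_zero.mpr (Nat.factorial_ne_zero d)
  have hfd1 : (Nat.factorial (d+1) : ℝ) ≠ 0 := Nat.cast_ne_zero.mpr (Nat.factorial_ne_zero _)
  have h1 : ((d:ℝ)+1) ≠ 0 := by positivity
  have h2 : ((d:ℝ)+2) ≠ 0 := by positivity
  have hconts : Continuous (fun x : Fin d → ℝ => ∑ i, x i) :=
    continuous_finset_sum _ fun i _ => continuous_apply i
  induction j using Fin.cases with
  | zero =>
    induction k using Fin.cases with
    | zero =>
      have he : (∫ x in Tset d, lam d x 0 * lam d x 0)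
          = ∫ x in Tset d, ((1:ℝ) - 2*(∑ i, x i) + (∑ i, x i)*(∑ i, x i)) :=
        integral_congr_ae (Filter.Eventually.of_forall fun x => by simp [lam]; ring)
      have ha : IntegrableOn (fun x : Fin d → ℝ => (1:ℝ) - 2*(∑ i, x i)) (Tset d) volume :=
        integrableOn_Tset (continuous_const.sub (continuous_const.mul hconts))
      have hb : IntegrableOn (fun x : Fin d → ℝ => (∑ i, x i)*(∑ i, x i)) (Tset d) volume :=
        integrableOn_Tset (hconts.mul hconts)
      have hc : IntegrableOn (fun _x : Fin d → ℝ => (1:ℝ)) (Tset d) volume :=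
        integrableOn_Tset continuous_const
      have hd' : IntegrableOn (fun x : Fin d → ℝ => 2*(∑ i, x i)) (Tset d) volume :=
        integrableOn_Tset (continuous_const.mul hconts)
      rw [he, integral_add ha hb, integral_sub hc hd',
        MeasureTheory.integral_const_mul, moment0, int_sum, int_sumsq, if_pos rfl,
        Nat.factorial_succ (d+1), Nat.factorial_succ d]
      push_cast
      field_simp
      ring
    | succ k =>
      have he : (∫ x in Tset d, lam d x 0 * lam d x k.succ)
          = ∫ x in Tset d, (x k - (∑ i, x i) * x k) :=
        integral_congr_ae (Filter.Eventually.of_forall fun x => by simp [lam]; ring)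
      rw [he, integral_sub (integrableOn_Tset (continuous_apply k))
          (integrableOn_Tset (f := fun x : Fin d → ℝ => (∑ i, x i) * x k) (hconts.mul (continuous_apply k))),
        moment1, int_cross, if_neg (Ne.symm (Fin.succ_ne_zero k)),
        Nat.factorial_succ (d+1), Nat.factorial_succ d]
      push_cast
      field_simp
      ring
  | succ j =>
    induction k using Fin.cases with
    | zero =>
      have he : (∫ x in Tset d, lam d x j.succ * lam d x 0)
          = ∫ x in Tset d, (x j - (∑ i, x i) * x j) :=
        integral_congr_ae (Filter.Eventually.of_forall fun x => by simp [lam]; ring)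
      rw [he, integral_sub (integrableOn_Tset (continuous_apply j))
          (integrableOn_Tset (f := fun x : Fin d → ℝ => (∑ i, x i) * x j) (hconts.mul (continuous_apply j))),
        moment1, int_cross, if_neg (Fin.succ_ne_zero j),
        Nat.factorial_succ (d+1), Nat.factorial_succ d]
      push_cast
      field_simp
      ring
    | succ k =>
      have he : (∫ x in Tset d, lam d x j.succ * lam d x k.succ)
          = ∫ x in Tset d, x j * x k :=
        integral_congr_ae (Filter.Eventually.of_forall fun x => by simp [lam])
      rw [he, moment2]
      simp only [Fin.succ_inj]

lemma contlam (d : ℕ) (j : Fin (d+1)) : Continuous fun x : Fin d → ℝ => lam d x j := by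
  induction j using Fin.cases with
  | zero =>
    have h : (fun x : Fin d → ℝ => lam d x 0) = fun x => 1 - ∑ i, x i := by
      funext x; simp [lam]
    rw [h]
    exact continuous_const.sub (continuous_finset_sum _ fun i _ => continuous_apply i)
  | succ j =>
    have h : (fun x : Fin d → ℝ => lam d x j.succ) = fun x => x j := by
      funext x; simp [lam]
    rw [h]; exact continuous_apply j

lemma Pcross (d : ℕ) (j k : Fin (d+1)) :
    (∫ x in Tset d, (1 - (d:ℝ) * lam d x j) * (1 - (d:ℝ) * lam d x k))
    = ((2 - (d:ℝ)) + (if j = k then ((d:ℝ))^2 else 0)) / (Nat.factorial (d+2) : ℝ) := by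
  have hfd : (Nat.factorial d : ℝ) ≠ 0 := Nat.cast_ne_zero.mpr (Nat.factorial_ne_zero d)
  have h1 : ((d:ℝ)+1) ≠ 0 := by positivity
  have h2 : ((d:ℝ)+2) ≠ 0 := by positivity
  have hcj := contlam d j
  have hck := contlam d k
  have he : (∫ x in Tset d, (1 - (d:ℝ) * lam d x j) * (1 - (d:ℝ) * lam d x k))
      = ∫ x in Tset d, ((1:ℝ) - (d:ℝ)*lam d x j - (d:ℝ)*lam d x k
          + (d:ℝ)^2 * (lam d x j * lam d x k)) :=
    integral_congr_ae (Filter.Eventually.of_forall fun x => by ring)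
  have ha : IntegrableOn (fun x : Fin d → ℝ =>
      (1:ℝ) - (d:ℝ)*lam d x j - (d:ℝ)*lam d x k) (Tset d) volume :=
    integrableOn_Tset ((continuous_const.sub (continuous_const.mul hcj)).sub
      (continuous_const.mul hck))
  have hb : IntegrableOn (fun x : Fin d → ℝ =>
      (d:ℝ)^2 * (lam d x j * lam d x k)) (Tset d) volume :=
    integrableOn_Tset (continuous_const.mul (hcj.mul hck))
  have hc : IntegrableOn (fun x : Fin d → ℝ => (1:ℝ) - (d:ℝ)*lam d x j) (Tset d) volume :=
    integrableOn_Tset (continuous_const.sub (continuous_const.mul hcj))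
  have hd1 : IntegrableOn (fun x : Fin d → ℝ => (d:ℝ)*lam d x k) (Tset d) volume :=
    integrableOn_Tset (continuous_const.mul hck)
  have hc1 : IntegrableOn (fun _x : Fin d → ℝ => (1:ℝ)) (Tset d) volume :=
    integrableOn_Tset continuous_const
  have hd2 : IntegrableOn (fun x : Fin d → ℝ => (d:ℝ)*lam d x j) (Tset d) volume :=
    integrableOn_Tset (continuous_const.mul hcj)
  rw [he, integral_add ha hb, integral_sub hc hd1, integral_sub hc1 hd2,
    MeasureTheory.integral_const_mul, MeasureTheory.integral_const_mul,
    MeasureTheory.integral_const_mul, moment0, L1, L1, L2,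
    Nat.factorial_succ (d+1), Nat.factorial_succ d]
  push_cast
  split_ifs
  · field_simp
    ring
  · field_simp
    ring

/-- Local norm equivalence for Crouzeix–Raviart basis functions.  Let
`d ≥ 2` and `ψ_j = 1 − d λ_j`.  Then for every `(v_0,…,v_d) ∈ ℝ^{d+1}`:
`∑_j v_j² ∫_T ψ_j² dx ≤ ((d²−d+2)/(d+2)) ∫_T (∑_j v_j ψ_j)² dx` and
`∫_T (∑_j v_j ψ_j)² dx ≤ (d²/(d²−d+2)) ∑_j v_j² ∫_T ψ_j² dx`. -/
theorem stmt_15 (d : ℕ) (hd : 2 ≤ d) (v : Fin (d + 1) → ℝ) :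
    (∑ j, (v j) ^ 2 * ∫ x in Tset d, (1 - (d : ℝ) * lam d x j) ^ 2)
        ≤ (((d : ℝ) ^ 2 - (d : ℝ) + 2) / ((d : ℝ) + 2))
          * ∫ x in Tset d, (∑ j, v j * (1 - (d : ℝ) * lam d x j)) ^ 2 ∧
    (∫ x in Tset d, (∑ j, v j * (1 - (d : ℝ) * lam d x j)) ^ 2)
        ≤ ((d : ℝ) ^ 2 / ((d : ℝ) ^ 2 - (d : ℝ) + 2))
          * ∑ j, (v j) ^ 2 * ∫ x in Tset d, (1 - (d : ℝ) * lam d x j) ^ 2 := by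
  have hdr : (2:ℝ) ≤ (d:ℝ) := by exact_mod_cast hd
  set N : ℝ := (Nat.factorial (d+2) : ℝ) with hNdef
  have hN : (0:ℝ) < N := by
    rw [hNdef]; exact_mod_cast Nat.factorial_pos (d+2)
  set S1 : ℝ := ∑ j, v j with hS1
  set S2 : ℝ := ∑ j, (v j)^2 with hS2
  have hS2nn : 0 ≤ S2 := Finset.sum_nonneg fun j _ => sq_nonneg _
  have hpsi : ∀ j : Fin (d+1), Continuous fun x : Fin d → ℝ => 1 - (d:ℝ) * lam d x j :=
    fun j => continuous_const.sub (continuous_const.mul (contlam d j))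
  have hA : (∑ j, (v j) ^ 2 * ∫ x in Tset d, (1 - (d : ℝ) * lam d x j) ^ 2)
      = S2 * (((2 - (d:ℝ)) + (d:ℝ)^2) / N) := by
    have hone : ∀ j : Fin (d+1), (∫ x in Tset d, (1 - (d : ℝ) * lam d x j) ^ 2)
        = ((2 - (d:ℝ)) + (d:ℝ)^2) / N := by
      intro j
      have hsq : (∫ x in Tset d, (1 - (d : ℝ) * lam d x j) ^ 2)
          = ∫ x in Tset d, (1 - (d : ℝ) * lam d x j) * (1 - (d : ℝ) * lam d x j) :=
        integral_congr_ae (Filter.Eventually.of_forall fun x => sq _)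
      rw [hsq, Pcross, if_pos rfl]
    simp_rw [hone]
    rw [← Finset.sum_mul]
  have hB : (∫ x in Tset d, (∑ j, v j * (1 - (d : ℝ) * lam d x j)) ^ 2)
      = ((2 - (d:ℝ)) * S1^2 + (d:ℝ)^2 * S2) / N := by
    have he : (∫ x in Tset d, (∑ j, v j * (1 - (d : ℝ) * lam d x j)) ^ 2)
        = ∫ x in Tset d, ∑ j, ∑ k, (v j * (1 - (d:ℝ) * lam d x j))
            * (v k * (1 - (d:ℝ) * lam d x k)) :=
      integral_congr_ae (Filter.Eventually.of_forall fun x => by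
        simp only [sq, Finset.sum_mul_sum])
    have hintg : ∀ j : Fin (d+1), IntegrableOn (fun x : Fin d → ℝ =>
        ∑ k, (v j * (1 - (d:ℝ)*lam d x j)) * (v k * (1 - (d:ℝ)*lam d x k)))
        (Tset d) volume :=
      fun j => integrableOn_Tset (continuous_finset_sum _ fun k _ =>
        (continuous_const.mul (hpsi j)).mul (continuous_const.mul (hpsi k)))
    rw [he, integral_finset_sum _ (fun j _ => hintg j)]
    have hin : ∀ j : Fin (d+1), (∫ x in Tset d, ∑ k, (v j * (1 - (d:ℝ)*lam d x j))
          * (v k * (1 - (d:ℝ)*lam d x k)))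
        = ∑ k, (v j * (v k * ((2 - (d:ℝ))/N))
            + (if j = k then v j * v k * ((d:ℝ)^2/N) else 0)) := by
      intro j
      rw [integral_finset_sum _ (fun k _ => integrableOn_Tset (f := fun x : Fin d → ℝ => (v j * (1 - (d:ℝ)*lam d x j)) * (v k * (1 - (d:ℝ)*lam d x k)))
        ((continuous_const.mul (hpsi j)).mul (continuous_const.mul (hpsi k))))]
      refine Finset.sum_congr rfl fun k _ => ?_
      have hee : (∫ x in Tset d, (v j * (1 - (d:ℝ)*lam d x j))
            * (v k * (1 - (d:ℝ)*lam d x k)))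
          = ∫ x in Tset d, (v j * v k)
            * ((1 - (d:ℝ)*lam d x j) * (1 - (d:ℝ)*lam d x k)) :=
        integral_congr_ae (Filter.Eventually.of_forall fun x => by ring)
      rw [hee, MeasureTheory.integral_const_mul, Pcross]
      split_ifs with h
      · field_simp
        ring
      · simp only [add_zero]
        field_simp
        ring
    simp_rw [hin, Finset.sum_add_distrib]
    have hdiag : ∀ j : Fin (d+1), (∑ k, if j = k then v j * v k * ((d:ℝ)^2/N) else 0)
        = (v j)^2 * ((d:ℝ)^2/N) := by
      intro j
      rw [Finset.sum_ite_eq Finset.univ j (fun k => v j * v k * ((d:ℝ)^2/N))]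
      simp [sq]
    have hoff : ∀ j : Fin (d+1), (∑ k, v j * (v k * ((2 - (d:ℝ))/N)))
        = v j * (S1 * ((2 - (d:ℝ))/N)) := by
      intro j
      rw [← Finset.mul_sum, ← Finset.sum_mul, ← hS1]
    simp_rw [hdiag, hoff]
    rw [← Finset.sum_mul, ← Finset.sum_mul, ← hS1, ← hS2]
    field_simp
  have hAconst : (2 - (d:ℝ)) + (d:ℝ)^2 = (d:ℝ)^2 - (d:ℝ) + 2 := by ring
  have hApos : (0:ℝ) < (d:ℝ)^2 - (d:ℝ) + 2 := by nlinarith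
  have hCauchy : S1^2 ≤ ((d:ℝ)+1) * S2 := by
    have h := sq_sum_le_card_mul_sum_sq (s := (Finset.univ : Finset (Fin (d+1)))) (f := v)
    rw [Finset.card_univ, Fintype.card_fin] at h
    calc S1^2 ≤ ((d+1 : ℕ) : ℝ) * S2 := by exact_mod_cast h
    _ = ((d:ℝ)+1) * S2 := by push_cast; ring
  rw [hA, hB, hAconst]
  constructor
  · have key : S2 * ((d:ℝ)^2 - (d:ℝ) + 2) ≤ (((d:ℝ)^2 - (d:ℝ) + 2) / ((d:ℝ) + 2))
        * ((2 - (d:ℝ)) * S1^2 + (d:ℝ)^2 * S2) := by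
      rw [div_mul_eq_mul_div, le_div_iff₀ (by linarith : (0:ℝ) < (d:ℝ)+2)]
      have h2 : ((d:ℝ)-2)*S1^2 ≤ ((d:ℝ)-2)*(((d:ℝ)+1)*S2) :=
        mul_le_mul_of_nonneg_left hCauchy (by linarith)
      have h4 : ((d:ℝ)+2)*S2 ≤ (2-(d:ℝ))*S1^2 + (d:ℝ)^2*S2 := by nlinarith
      have h5 : ((d:ℝ)^2 - (d:ℝ) + 2) * (((d:ℝ)+2)*S2)
          ≤ ((d:ℝ)^2 - (d:ℝ) + 2) * ((2-(d:ℝ))*S1^2 + (d:ℝ)^2*S2) :=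
        mul_le_mul_of_nonneg_left h4 hApos.le
      nlinarith [h5]
    calc S2 * (((d:ℝ)^2 - (d:ℝ) + 2) / N)
        = (S2 * ((d:ℝ)^2 - (d:ℝ) + 2)) / N := by ring
      _ ≤ ((((d:ℝ)^2 - (d:ℝ) + 2) / ((d:ℝ) + 2)) * ((2 - (d:ℝ)) * S1^2 + (d:ℝ)^2 * S2)) / N := by
          exact (div_le_div_iff_of_pos_right hN).mpr key
      _ = (((d:ℝ)^2 - (d:ℝ) + 2) / ((d:ℝ) + 2)) * (((2 - (d:ℝ)) * S1^2 + (d:ℝ)^2 * S2) / N) := by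
          ring
  · have hrhs : ((d:ℝ)^2 / ((d:ℝ)^2 - (d:ℝ) + 2)) * (S2 * (((d:ℝ)^2 - (d:ℝ) + 2) / N))
        = ((d:ℝ)^2 * S2) / N := by
      calc _ = ((d:ℝ)^2 * S2) / N * (((d:ℝ)^2 - (d:ℝ) + 2) / ((d:ℝ)^2 - (d:ℝ) + 2)) := by ring
        _ = _ := by rw [div_self hApos.ne', mul_one]
    rw [hrhs]
    refine (div_le_div_iff_of_pos_right hN).mpr ?_
    nlinarith [sq_nonneg S1]
end

section
/- Let K₁, K₂ > 0 be reals such that for every family of reals (v_f)_{f∈F}: ∑_{f∈F} ‖v_f·ψ_f‖² ≤ K₁·‖∑_{f∈F} v_f·ψ_f‖² and ‖∑_{f∈F} v_f·ψ_f‖² ≤ K₂·∑_{f∈F} ‖v_f·ψ_f‖². Then ‖v‖² ≤ K₁·⟨Cv, v⟩ for every v in the linear span of (ψ_f)_{f∈F}, and ‖Cu‖ ≤ K₂·‖u‖ for every u ∈ H. -/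
open RealInnerProductSpace

/-- Eigenvalue bounds for the Crouzeix–Raviart operator `C`.  Let `H` be
a real inner product space, `(ψ_f)_{f∈F}` a finite family of nonzero vectors and
`C u = ∑_f (⟨u, ψ_f⟩/‖ψ_f‖²) ψ_f`.  If `K₁, K₂ > 0` satisfy
`∑_f ‖v_f ψ_f‖² ≤ K₁ ‖∑_f v_f ψ_f‖²` and `‖∑_f v_f ψ_f‖² ≤ K₂ ∑_f ‖v_f ψ_f‖²` for all
`(v_f)`, then `‖v‖² ≤ K₁ ⟨Cv, v⟩` on the span of the `ψ_f` and `‖Cu‖ ≤ K₂ ‖u‖` on `H`. -/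
theorem stmt_16 {H : Type*} [NormedAddCommGroup H] [InnerProductSpace ℝ H]
    {F : Type*} [Fintype F] (ψ : F → H) (hψ : ∀ f, ψ f ≠ 0)
    (K₁ K₂ : ℝ) (hK₁ : 0 < K₁) (hK₂ : 0 < K₂)
    (h1 : ∀ v : F → ℝ, ∑ f, ‖v f • ψ f‖ ^ 2 ≤ K₁ * ‖∑ f, v f • ψ f‖ ^ 2)
    (h2 : ∀ v : F → ℝ, ‖∑ f, v f • ψ f‖ ^ 2 ≤ K₂ * ∑ f, ‖v f • ψ f‖ ^ 2) :
    (∀ v ∈ Submodule.span ℝ (Set.range ψ),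
      ‖v‖ ^ 2 ≤ K₁ * ⟪∑ f, (⟪v, ψ f⟫ / ‖ψ f‖ ^ 2) • ψ f, v⟫) ∧
    (∀ u : H, ‖∑ f, (⟪u, ψ f⟫ / ‖ψ f‖ ^ 2) • ψ f‖ ≤ K₂ * ‖u‖) := by
  have hnorm : ∀ f, (0:ℝ) < ‖ψ f‖ := fun f => norm_pos_iff.2 (hψ f)
  -- key identity: ⟪C u, u⟫ = ∑ ⟪u, ψ f⟫^2 / ‖ψ f‖^2
  have hC : ∀ u : H, ⟪∑ f, (⟪u, ψ f⟫ / ‖ψ f‖ ^ 2) • ψ f, u⟫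
      = ∑ f, ⟪u, ψ f⟫ ^ 2 / ‖ψ f‖ ^ 2 := by
    intro u
    rw [sum_inner]
    refine Finset.sum_congr rfl fun f _ => ?_
    rw [real_inner_smul_left, real_inner_comm]
    ring
  have hCnn : ∀ u : H, (0:ℝ) ≤ ∑ f, ⟪u, ψ f⟫ ^ 2 / ‖ψ f‖ ^ 2 :=
    fun u => Finset.sum_nonneg fun f _ => div_nonneg (sq_nonneg _) (sq_nonneg _)
  constructor
  · intro v hv
    rw [hC v]
    obtain ⟨c, hc⟩ := (Submodule.mem_span_range_iff_exists_fun ℝ).1 hv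
    -- ‖v‖² = ∑ c f * ⟪v, ψ f⟫
    have key : ‖v‖ ^ 2 = ∑ f, (c f * ‖ψ f‖) * (⟪v, ψ f⟫ / ‖ψ f‖) := by
      have : ‖v‖ ^ 2 = ⟪v, v⟫ := (real_inner_self_eq_norm_sq v).symm
      rw [this]
      nth_rewrite 2 [← hc]
      rw [inner_sum]
      refine Finset.sum_congr rfl fun f _ => ?_
      rw [real_inner_smul_right]
      have hne := (hnorm f).ne'
      field_simp
    have CS := Finset.sum_mul_sq_le_sq_mul_sq Finset.univ
      (fun f => c f * ‖ψ f‖) (fun f => ⟪v, ψ f⟫ / ‖ψ f‖)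
    have sq1 : ∑ f, (c f * ‖ψ f‖) ^ 2 = ∑ f, ‖c f • ψ f‖ ^ 2 := by
      refine Finset.sum_congr rfl fun f _ => ?_
      rw [norm_smul]
      simp [mul_pow, Real.norm_eq_abs, sq_abs]
    have sq2 : ∑ f, (⟪v, ψ f⟫ / ‖ψ f‖) ^ 2 = ∑ f, ⟪v, ψ f⟫ ^ 2 / ‖ψ f‖ ^ 2 := by
      refine Finset.sum_congr rfl fun f _ => ?_
      rw [div_pow]
    set S := ∑ f, ⟪v, ψ f⟫ ^ 2 / ‖ψ f‖ ^ 2 with hS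
    have hSnn : 0 ≤ S := hCnn v
    have h1v := h1 c
    rw [hc] at h1v
    -- combine
    have step : (‖v‖ ^ 2) ^ 2 ≤ (K₁ * ‖v‖ ^ 2) * S := by
      calc (‖v‖ ^ 2) ^ 2 = (∑ f, (c f * ‖ψ f‖) * (⟪v, ψ f⟫ / ‖ψ f‖)) ^ 2 := by rw [key]
        _ ≤ (∑ f, (c f * ‖ψ f‖) ^ 2) * (∑ f, (⟪v, ψ f⟫ / ‖ψ f‖) ^ 2) := by
            exact_mod_cast CS
        _ ≤ (K₁ * ‖v‖ ^ 2) * S := by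
            rw [sq1, sq2]
            exact mul_le_mul_of_nonneg_right h1v hSnn
    rcases eq_or_lt_of_le (norm_nonneg v) with h0 | h0
    · simp [← h0]
      positivity
    · have hv2 : (0:ℝ) < ‖v‖ ^ 2 := by positivity
      nlinarith [step]
  · intro u
    set w : F → ℝ := fun f => ⟪u, ψ f⟫ / ‖ψ f‖ ^ 2 with hw
    set Cu := ∑ f, w f • ψ f with hCu
    have hsum : ∑ f, ‖w f • ψ f‖ ^ 2 = ∑ f, ⟪u, ψ f⟫ ^ 2 / ‖ψ f‖ ^ 2 := by
      refine Finset.sum_congr rfl fun f _ => ?_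
      rw [norm_smul, mul_pow, Real.norm_eq_abs, sq_abs, hw]
      have := (hnorm f).ne'
      field_simp
    have h2u := h2 w
    rw [← hCu, hsum] at h2u
    have hinner : ∑ f, ⟪u, ψ f⟫ ^ 2 / ‖ψ f‖ ^ 2 = ⟪Cu, u⟫ := (hC u).symm
    have hle : ‖Cu‖ ^ 2 ≤ K₂ * (‖Cu‖ * ‖u‖) := by
      calc ‖Cu‖ ^ 2 ≤ K₂ * ⟪Cu, u⟫ := by rw [← hinner]; exact h2u
        _ ≤ K₂ * (‖Cu‖ * ‖u‖) :=
            mul_le_mul_of_nonneg_left (real_inner_le_norm Cu u) hK₂.le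
    rcases eq_or_lt_of_le (norm_nonneg Cu) with h0 | h0
    · rw [← h0]; positivity
    · nlinarith [norm_nonneg u]
end
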